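/- arXiv:2509.04614 — 3 statements merged into one kernel-verified Lean document; each statement's English description precedes it below -/
import Mathlib

section
/- Let y be a point of X_{F_2}(m) (a sequence in P¹(F_2) with boundary conditions and consecutive entries distinct) such that y_i = [1:1] for at least one i. Then y has a unique preimage triangulation under the coloring map c if and only if there exists an index i such that y_i ≠ y_j for all j ≠ i. -/
/-- The projective line over a field `F`. -/
abbrev P1 (F : Type*) [Field F] := Projectivization F (F × F)

/-- The point `[1:0]` of the projective line. -/
noncomputable def ptZero (F : Type*) [Field F] : P1 F :=
  Projectivization.mk F (1, 0) (fun h => one_ne_zero (congrArg Prod.fst h))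

/-- The point `[0:1]` of the projective line. -/
noncomputable def ptInf (F : Type*) [Field F] : P1 F :=
  Projectivization.mk F (0, 1) (fun h => one_ne_zero (congrArg Prod.snd h))

/-- The point `[1:1]` of the projective line. -/
noncomputable def ptOne (F : Type*) [Field F] : P1 F :=
  Projectivization.mk F (1, 1) (fun h => one_ne_zero (congrArg Prod.fst h))

/-- `p = (i, j)` is a diagonal of the convex `(m+1)`-gon with vertices `0, …, m`:
`i < j`, the two vertices are not consecutive, and `(0, m)` is excluded (it is a side). -/
def IsDiag (m : ℕ) (p : ℕ × ℕ) : Prop :=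
  p.1 + 2 ≤ p.2 ∧ p.2 ≤ m ∧ ¬(p.1 = 0 ∧ p.2 = m)

instance (m : ℕ) (p : ℕ × ℕ) : Decidable (IsDiag m p) := by unfold IsDiag; infer_instance

/-- The type of diagonals of the convex `(m+1)`-gon. -/
abbrev Diagonal (m : ℕ) := {p : ℕ × ℕ // IsDiag m p}

/-- Two diagonals cross in the interior of the polygon. -/
def Crossing {m : ℕ} (d e : Diagonal m) : Prop :=
  (d.val.1 < e.val.1 ∧ e.val.1 < d.val.2 ∧ d.val.2 < e.val.2) ∨
  (e.val.1 < d.val.1 ∧ d.val.1 < e.val.2 ∧ e.val.2 < d.val.2)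

/-- A triangulation of the convex `(m+1)`-gon: a maximal set of pairwise
non-crossing diagonals (maximality = having `(m+1) - 3` diagonals). -/
structure Triangulation (m : ℕ) where
  diags : Finset (Diagonal m)
  noncross : ∀ d ∈ diags, ∀ e ∈ diags, ¬ Crossing d e
  card_eq : diags.card = m - 2

/-- `y` takes distinct values on the endpoints of every diagonal of `T`
(i.e. `y` lies in the cluster torus of `T`). -/
def ProperDiags {F : Type*} [Field F] {m : ℕ} (T : Triangulation m) (y : ℕ → P1 F) : Prop :=
  ∀ d ∈ T.diags, y d.val.1 ≠ y d.val.2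

/-- `c` is a proper coloring of the full graph of the triangulation `T`
(sides of the polygon together with the diagonals of `T`). -/
def ProperGraph {F : Type*} [Field F] {m : ℕ} (T : Triangulation m) (c : ℕ → P1 F) : Prop :=
  (∀ i < m, c i ≠ c (i + 1)) ∧ c m ≠ c 0 ∧ ProperDiags T c

/-- `y` is a point of `X_F(m)`: `y 0 = [1:0]`, `y m = [0:1]`, consecutive entries distinct. -/
def XCond (F : Type*) [Field F] (m : ℕ) (y : ℕ → P1 F) : Prop :=
  y 0 = ptZero F ∧ y m = ptInf F ∧ ∀ i < m, y i ≠ y (i + 1)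

/-- `y` is the alternating sequence `([1:0], [0:1], [1:0], …)` on `0, …, m`. -/
def IsAltSeq (F : Type*) [Field F] (m : ℕ) (y : ℕ → P1 F) : Prop :=
  ∀ i ≤ m, y i = if i % 2 = 0 then ptZero F else ptInf F

/-- The diagonal `d` is valid for the point `y`: its endpoints have distinct labels and
on each of the two sub-polygons determined by `d` the labels take at least three values. -/
def ValidDiag (F : Type*) [Field F] (m : ℕ) (y : ℕ → P1 F) (d : Diagonal m) : Prop :=
  y d.val.1 ≠ y d.val.2 ∧
  3 ≤ (y '' (Set.Icc d.val.1 d.val.2)).ncard ∧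
  3 ≤ (y '' (Set.Icc 0 d.val.1 ∪ Set.Icc d.val.2 m)).ncard

/-- `T'` is obtained from `T` by removing the diagonals `old` and adding the diagonals `new`. -/
def SwapMove {m : ℕ} (T T' : Triangulation m) (old new : Finset (Diagonal m)) : Prop :=
  old ⊆ T.diags ∧ T'.diags = (T.diags \ old) ∪ new

/-- Zig-zag hexagonal move: inside a hexagonal sub-polygon with vertices
`v 0 < ⋯ < v 5`, replace the zig-zag `{15, 35, 36}` by the zig-zag `{24, 26, 46}`
(in the labels `1, …, 6` of the hexagon). -/
def ZigZagMoveOne {m : ℕ} (T T' : Triangulation m) : Prop :=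
  ∃ v : Fin 6 → ℕ, StrictMono v ∧ v 5 ≤ m ∧
    ∃ (h1 : IsDiag m (v 0, v 4)) (h2 : IsDiag m (v 2, v 4)) (h3 : IsDiag m (v 2, v 5))
      (h4 : IsDiag m (v 1, v 3)) (h5 : IsDiag m (v 1, v 5)) (h6 : IsDiag m (v 3, v 5)),
      SwapMove T T' {⟨(v 0, v 4), h1⟩, ⟨(v 2, v 4), h2⟩, ⟨(v 2, v 5), h3⟩}
        {⟨(v 1, v 3), h4⟩, ⟨(v 1, v 5), h5⟩, ⟨(v 3, v 5), h6⟩}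

/-- Inscribed-triangle hexagonal move: inside a hexagonal sub-polygon with vertices
`v 0 < ⋯ < v 5`, replace the inscribed triangle `{13, 35, 51}` by `{24, 46, 62}`. -/
def InscribedMoveOne {m : ℕ} (T T' : Triangulation m) : Prop :=
  ∃ v : Fin 6 → ℕ, StrictMono v ∧ v 5 ≤ m ∧
    ∃ (h1 : IsDiag m (v 0, v 2)) (h2 : IsDiag m (v 2, v 4)) (h3 : IsDiag m (v 0, v 4))
      (h4 : IsDiag m (v 1, v 3)) (h5 : IsDiag m (v 3, v 5)) (h6 : IsDiag m (v 1, v 5)),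
      SwapMove T T' {⟨(v 0, v 2), h1⟩, ⟨(v 2, v 4), h2⟩, ⟨(v 0, v 4), h3⟩}
        {⟨(v 1, v 3), h4⟩, ⟨(v 3, v 5), h5⟩, ⟨(v 1, v 5), h6⟩}

/-- A hexagonal move (in either direction). -/
def HexMove {m : ℕ} (T T' : Triangulation m) : Prop :=
  ZigZagMoveOne T T' ∨ ZigZagMoveOne T' T ∨ InscribedMoveOne T T' ∨ InscribedMoveOne T' T



lemma zmod2cases : ∀ x : ZMod 2, x = 0 ∨ x = 1 := by decide

lemma p1cases (p : P1 (ZMod 2)) : p = ptZero (ZMod 2) ∨ p = ptInf (ZMod 2) ∨ p = ptOne (ZMod 2) := by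
  induction p using Projectivization.ind with
  | h v hv =>
    obtain ⟨x, y⟩ := v
    rcases zmod2cases x with hx | hx <;> rcases zmod2cases y with hy | hy <;> subst hx hy
    · simp at hv
    · right; left; rfl
    · left; rfl
    · right; right; rfl

lemma mkne (v w : ZMod 2 × ZMod 2) (hv hw) (h : v ≠ w) :
    Projectivization.mk (ZMod 2) v hv ≠ Projectivization.mk (ZMod 2) w hw := by
  rw [Ne, Projectivization.mk_eq_mk_iff]
  rintro ⟨a, ha⟩
  apply h
  have h1 : (a : ZMod 2) = 1 := by
    rcases zmod2cases (a : ZMod 2) with h1 | h1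
    · exact absurd h1 a.ne_zero
    · exact h1
  rw [Units.smul_def, h1, one_smul] at ha
  exact ha.symm

lemma zero_ne_inf : ptZero (ZMod 2) ≠ ptInf (ZMod 2) := mkne _ _ _ _ (by decide)
lemma zero_ne_one1 : ptZero (ZMod 2) ≠ ptOne (ZMod 2) := mkne _ _ _ _ (by decide)
lemma inf_ne_one1 : ptInf (ZMod 2) ≠ ptOne (ZMod 2) := mkne _ _ _ _ (by decide)

lemma third_eq {u v w₁ w₂ : P1 (ZMod 2)} (huv : u ≠ v) (h1u : w₁ ≠ u) (h1v : w₁ ≠ v)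
    (h2u : w₂ ≠ u) (h2v : w₂ ≠ v) : w₁ = w₂ := by
  rcases p1cases u with h|h|h <;> rcases p1cases v with g|g|g <;>
    rcases p1cases w₁ with e|e|e <;> rcases p1cases w₂ with f|f|f <;> subst h g e f <;>
    first
      | rfl
      | (exact absurd rfl huv) | (exact absurd rfl h1u) | (exact absurd rfl h1v)
      | (exact absurd rfl h2u) | (exact absurd rfl h2v)
def Chord (a b : ℕ) (p : ℕ × ℕ) : Prop :=
  a ≤ p.1 ∧ p.1 + 2 ≤ p.2 ∧ p.2 ≤ b ∧ p ≠ (a, b)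

def Cross (p q : ℕ × ℕ) : Prop :=
  (p.1 < q.1 ∧ q.1 < p.2 ∧ p.2 < q.2) ∨ (q.1 < p.1 ∧ p.1 < q.2 ∧ q.2 < p.2)

def NC (S : Finset (ℕ × ℕ)) : Prop := ∀ p ∈ S, ∀ q ∈ S, ¬ Cross p q

lemma NC.subset {S T : Finset (ℕ × ℕ)} (h : NC T) (hs : S ⊆ T) : NC S :=
  fun p hp q hq => h p (hs hp) q (hs hq)

lemma chord_ne (a b : ℕ) (p : ℕ × ℕ) (h : p ≠ (a,b)) : p.1 ≠ a ∨ p.2 ≠ b := by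
  by_contra hc; push_neg at hc; exact h (Prod.ext hc.1 hc.2)

lemma cardBound : ∀ n a b (S : Finset (ℕ × ℕ)), b - a ≤ n →
    (∀ p ∈ S, Chord a b p) → NC S → S.card ≤ b - a - 2 := by
  intro n
  induction n using Nat.strong_induction_on with
  | _ n IH =>
    intro a b S hn hch hnc
    rcases S.eq_empty_or_nonempty with rfl | hne
    · simp
    obtain ⟨⟨c, d⟩, hcd, hmax⟩ := S.exists_max_image (fun p => p.2 - p.1) hne
    obtain ⟨hac, hcd2, hdb, hne0⟩ := hch _ hcd
    simp only at hac hcd2 hdb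
    have hne0' : c ≠ a ∨ d ≠ b := by
      rcases chord_ne a b (c,d) hne0 with h | h
      · exact Or.inl h
      · exact Or.inr h
    set S' := S.erase (c, d) with hS'
    have hsub : S' ⊆ S := Finset.erase_subset _ _
    -- coverage
    have hcov : ∀ p ∈ S', p.2 ≤ c ∨ (c ≤ p.1 ∧ p.2 ≤ d) ∨ d ≤ p.1 := by
      intro p hp
      have hpS : p ∈ S := hsub hp
      have hpc : Chord a b p := hch _ hpS
      have hncp : ¬ Cross p (c, d) := hnc _ hpS _ hcd
      have hlen : p.2 - p.1 ≤ d - c := hmax _ hpS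
      have hpne : p ≠ (c, d) := Finset.ne_of_mem_erase hp
      have hpne' : p.1 ≠ c ∨ p.2 ≠ d := chord_ne c d p hpne
      unfold Cross at hncp
      push_neg at hncp
      obtain ⟨h1, h2, h3, _⟩ := hpc
      omega
    classical
    set f1 := S'.filter (fun p => p.2 ≤ c) with hf1
    set f23 := S'.filter (fun p => ¬ p.2 ≤ c) with hf23
    set f2 := f23.filter (fun p => p.2 ≤ d) with hf2
    set f3 := f23.filter (fun p => ¬ p.2 ≤ d) with hf3
    have hcard1 : f1.card + f23.card = S'.card := Finset.card_filter_add_card_filter_not _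
    have hcard2 : f2.card + f3.card = f23.card := Finset.card_filter_add_card_filter_not _
    have hScard : S'.card + 1 = S.card := Finset.card_erase_add_one hcd
    -- bound f1
    have hb1 : f1.card ≤ c - a - 1 ∧ (c < a + 2 → f1.card = 0) := by
      constructor
      · have h1 : ((f1.erase (a,c)).card : ℕ) ≤ c - a - 2 := by
          apply IH (c - a) (by omega) a c
          · omega
          · intro p hp
            have hp1 := Finset.mem_of_mem_erase hp
            rw [hf1, Finset.mem_filter] at hp1
            obtain ⟨hpS', hple⟩ := hp1
            obtain ⟨w1, w2, w3, w4⟩ := hch _ (hsub hpS')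
            exact ⟨w1, w2, hple, Finset.ne_of_mem_erase hp⟩
          · apply hnc.subset
            intro p hp
            have := Finset.mem_of_mem_erase hp
            rw [hf1, Finset.mem_filter] at this
            exact hsub this.1
        have h2 : f1.card - 1 ≤ (f1.erase (a,c)).card := Finset.pred_card_le_card_erase
        -- need: if c ≥ a+2 then fine; if c < a+2 then f1 empty
        by_cases hca : a + 2 ≤ c
        · omega
        · have : f1 = ∅ := by
            rw [Finset.eq_empty_iff_forall_notMem]
            intro p hp
            rw [hf1, Finset.mem_filter] at hp
            obtain ⟨hpS', hple⟩ := hp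
            obtain ⟨w1, w2, _, _⟩ := hch _ (hsub hpS')
            omega
          simp [this]
      · intro hca
        have : f1 = ∅ := by
          rw [Finset.eq_empty_iff_forall_notMem]
          intro p hp
          rw [hf1, Finset.mem_filter] at hp
          obtain ⟨hpS', hple⟩ := hp
          obtain ⟨w1, w2, _, _⟩ := hch _ (hsub hpS')
          omega
        simp [this]
    -- bound f2
    have hb2 : f2.card ≤ d - c - 2 := by
      apply IH (d - c) (by omega) c d
      · omega
      · intro p hp
        rw [hf2, Finset.mem_filter, hf23, Finset.mem_filter] at hp
        obtain ⟨⟨hpS', hgt⟩, hled⟩ := hp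
        have hcv := hcov _ hpS'
        obtain ⟨w1, w2, w3, _⟩ := hch _ (hsub hpS')
        have hge : c ≤ p.1 := by omega
        exact ⟨hge, w2, hled, Finset.ne_of_mem_erase hpS'⟩
      · apply hnc.subset
        intro p hp
        rw [hf2, Finset.mem_filter, hf23, Finset.mem_filter] at hp
        exact hsub hp.1.1
    -- bound f3
    have hb3 : f3.card ≤ b - d - 1 ∧ (b < d + 2 → f3.card = 0) := by
      constructor
      · have h1 : ((f3.erase (d,b)).card : ℕ) ≤ b - d - 2 := by
          apply IH (b - d) (by omega) d b
          · omega
          · intro p hp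
            have hp1 := Finset.mem_of_mem_erase hp
            rw [hf3, Finset.mem_filter, hf23, Finset.mem_filter] at hp1
            obtain ⟨⟨hpS', hgt⟩, hgtd⟩ := hp1
            have hcv := hcov _ hpS'
            obtain ⟨w1, w2, w3, _⟩ := hch _ (hsub hpS')
            have hge : d ≤ p.1 := by omega
            exact ⟨hge, w2, w3, Finset.ne_of_mem_erase hp⟩
          · apply hnc.subset
            intro p hp
            have := Finset.mem_of_mem_erase hp
            rw [hf3, Finset.mem_filter, hf23, Finset.mem_filter] at this
            exact hsub this.1.1
        have h2 : f3.card - 1 ≤ (f3.erase (d,b)).card := Finset.pred_card_le_card_erase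
        by_cases hdb2 : d + 2 ≤ b
        · omega
        · have : f3 = ∅ := by
            rw [Finset.eq_empty_iff_forall_notMem]
            intro p hp
            rw [hf3, Finset.mem_filter, hf23, Finset.mem_filter] at hp
            obtain ⟨⟨hpS', hgt⟩, hgtd⟩ := hp
            have hcv := hcov _ hpS'
            obtain ⟨w1, w2, w3, _⟩ := hch _ (hsub hpS')
            omega
          simp [this]
      · intro hdb2
        have : f3 = ∅ := by
          rw [Finset.eq_empty_iff_forall_notMem]
          intro p hp
          rw [hf3, Finset.mem_filter, hf23, Finset.mem_filter] at hp
          obtain ⟨⟨hpS', hgt⟩, hgtd⟩ := hp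
          have hcv := hcov _ hpS'
          obtain ⟨w1, w2, w3, _⟩ := hch _ (hsub hpS')
          omega
        simp [this]
    obtain ⟨hb1a, hb1b⟩ := hb1
    obtain ⟨hb3a, hb3b⟩ := hb3
    by_cases hca : a + 2 ≤ c <;> by_cases hdb2 : d + 2 ≤ b
    · omega
    · have := hb3b (by omega); omega
    · have := hb1b (by omega); omega
    · have h1 := hb1b (by omega); have h3 := hb3b (by omega); omega
def PT (y : ℕ → P1 (ZMod 2)) (a b : ℕ) (S : Finset (ℕ × ℕ)) : Prop :=
  (∀ p ∈ S, Chord a b p) ∧ NC S ∧ S.card = b - a - 2 ∧ ∀ p ∈ S, y p.1 ≠ y p.2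

def IsApex (a b : ℕ) (S : Finset (ℕ × ℕ)) (k : ℕ) : Prop :=
  a < k ∧ k < b ∧ (k = a + 1 ∨ (a, k) ∈ S) ∧ (k = b - 1 ∨ (k, b) ∈ S)

lemma PT_small {y a b S} (h : PT y a b S) (hab : b < a + 2) : S = ∅ := by
  rw [Finset.eq_empty_iff_forall_notMem]
  intro p hp
  obtain ⟨w1, w2, w3, _⟩ := h.1 p hp
  omega

lemma exists_apex {y a b S} (hPT : PT y a b S) (hab : a + 2 ≤ b) : ∃ k, IsApex a b S k := by
  classical
  obtain ⟨hch, hnc, hcard, _⟩ := hPT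
  set C := (Finset.Ioo a b).filter (fun w => w = a + 1 ∨ (a, w) ∈ S) with hC
  have hCne : C.Nonempty := ⟨a + 1, by simp [hC, Finset.mem_Ioo]; omega⟩
  set c := C.max' hCne with hc
  have hcmem : c ∈ C := C.max'_mem hCne
  rw [hC, Finset.mem_filter, Finset.mem_Ioo] at hcmem
  obtain ⟨⟨hac, hcb⟩, hleft⟩ := hcmem
  refine ⟨c, hac, hcb, hleft, ?_⟩
  by_contra hright
  push_neg at hright
  obtain ⟨hcb1, hcbS⟩ := hright
  -- partition
  set S1 := S.filter (fun p => p.2 ≤ c) with hS1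
  set S2 := S.filter (fun p => ¬ p.2 ≤ c) with hS2
  have hcards : S1.card + S2.card = S.card := Finset.card_filter_add_card_filter_not _
  have hcov : ∀ p ∈ S2, c ≤ p.1 := by
    intro p hp
    rw [hS2, Finset.mem_filter] at hp
    obtain ⟨hpS, hgt⟩ := hp
    obtain ⟨w1, w2, w3, w4⟩ := hch p hpS
    by_contra hlt
    push_neg at hlt
    rcases Nat.eq_or_lt_of_le w1 with heq | hgt1
    · -- p.1 = a
      have hp2b : p.2 < b := by
        rcases chord_ne a b p w4 with h | h
        · omega
        · omega
      have : p.2 ∈ C := by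
        rw [hC, Finset.mem_filter, Finset.mem_Ioo]
        refine ⟨⟨by omega, hp2b⟩, Or.inr ?_⟩
        have : p = (a, p.2) := by
          rw [Prod.ext_iff]; exact ⟨heq.symm, rfl⟩
        rwa [← this]
      have := C.le_max' _ this
      omega
    · -- a < p.1 < c, so (a,c) ∈ S and crossing
      have hacS : (a, c) ∈ S := by
        rcases hleft with h | h
        · omega
        · exact h
      exact hnc _ hacS _ hpS (Or.inl ⟨by omega, by omega, by omega⟩)
  have hb1 : S1.card ≤ c - a - 1 := by
    have h1 : ((S1.erase (a, c)).card : ℕ) ≤ c - a - 2 := by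
      apply cardBound (c - a) a c _ le_rfl
      · intro p hp
        have hp1 := Finset.mem_of_mem_erase hp
        rw [hS1, Finset.mem_filter] at hp1
        obtain ⟨hpS, hple⟩ := hp1
        obtain ⟨w1, w2, _, _⟩ := hch p hpS
        exact ⟨w1, w2, hple, Finset.ne_of_mem_erase hp⟩
      · apply hnc.subset
        intro p hp
        have := Finset.mem_of_mem_erase hp
        rw [hS1, Finset.mem_filter] at this
        exact this.1
    have h2 : S1.card - 1 ≤ (S1.erase (a, c)).card := Finset.pred_card_le_card_erase
    by_cases hca : a + 2 ≤ c
    · omega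
    · have : S1 = ∅ := by
        rw [Finset.eq_empty_iff_forall_notMem]
        intro p hp
        rw [hS1, Finset.mem_filter] at hp
        obtain ⟨w1, w2, _, _⟩ := hch p hp.1
        omega
      simp [this]
  have hb1' : a + 2 ≤ c ∨ S1.card = 0 := by
    by_cases hca : a + 2 ≤ c
    · exact Or.inl hca
    · right
      have : S1 = ∅ := by
        rw [Finset.eq_empty_iff_forall_notMem]
        intro p hp
        rw [hS1, Finset.mem_filter] at hp
        obtain ⟨w1, w2, _, _⟩ := hch p hp.1
        omega
      simp [this]
  have hb2 : S2.card ≤ b - c - 2 := by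
    apply cardBound (b - c) c b _ le_rfl
    · intro p hp
      have hcle := hcov p hp
      rw [hS2, Finset.mem_filter] at hp
      obtain ⟨hpS, hgt⟩ := hp
      obtain ⟨w1, w2, w3, _⟩ := hch p hpS
      refine ⟨hcle, w2, w3, ?_⟩
      intro heq
      rw [heq] at hpS
      exact hcbS hpS
    · apply hnc.subset
      intro p hp
      rw [hS2, Finset.mem_filter] at hp
      exact hp.1
  omega

lemma apex_lt {a b : ℕ} {S : Finset (ℕ × ℕ)} (hch : ∀ p ∈ S, Chord a b p) (hnc : NC S)
    {k k' : ℕ} (h : IsApex a b S k) (h' : IsApex a b S k') (hlt : k < k') : False := by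
  obtain ⟨h1, h2, h3, h4⟩ := h
  obtain ⟨h1', h2', h3', h4'⟩ := h'
  have hkb : (k, b) ∈ S := by
    rcases h4 with h | h
    · omega
    · exact h
  have hak' : (a, k') ∈ S := by
    rcases h3' with h | h
    · omega
    · exact h
  exact hnc _ hkb _ hak' (Or.inr ⟨by omega, by omega, by omega⟩)

lemma apex_unique {y a b S} (hPT : PT y a b S) {k k' : ℕ}
    (h : IsApex a b S k) (h' : IsApex a b S k') : k = k' := by
  rcases Nat.lt_trichotomy k k' with hlt | heq | hlt
  · exact absurd (apex_lt hPT.1 hPT.2.1 h h' hlt) (by simp)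
  · exact heq
  · exact absurd (apex_lt hPT.1 hPT.2.1 h' h hlt) (by simp)
noncomputable def glue (a b k : ℕ) (S1 S2 : Finset (ℕ × ℕ)) : Finset (ℕ × ℕ) :=
  ((if a + 2 ≤ k then {(a, k)} else ∅) ∪ (if k + 2 ≤ b then {(k, b)} else ∅)) ∪ S1 ∪ S2

lemma glue_mem {a b k : ℕ} {S1 S2 : Finset (ℕ × ℕ)} {p : ℕ × ℕ} :
    p ∈ glue a b k S1 S2 ↔
      (a + 2 ≤ k ∧ p = (a, k)) ∨ (k + 2 ≤ b ∧ p = (k, b)) ∨ p ∈ S1 ∨ p ∈ S2 := by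
  unfold glue
  split_ifs with h1 h2 h2 <;> simp [Finset.mem_union, Finset.mem_singleton] <;> tauto

lemma split_coverage {y a b S} (hPT : PT y a b S) {k : ℕ} (hk : IsApex a b S k) :
    ∀ p ∈ S, p.2 ≤ k ∨ k ≤ p.1 := by
  obtain ⟨hch, hnc, hcard, _⟩ := hPT
  obtain ⟨h1, h2, h3, h4⟩ := hk
  intro p hp
  by_contra hcon
  push_neg at hcon
  obtain ⟨hgt, hlt⟩ := hcon
  obtain ⟨w1, w2, w3, w4⟩ := hch p hp
  rcases Nat.eq_or_lt_of_le w1 with heq | hgt1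
  · -- p.1 = a
    have hp2b : p.2 < b := by
      rcases chord_ne a b p w4 with h | h <;> omega
    have hkbS : (k, b) ∈ S := by
      rcases h4 with h | h
      · omega
      · exact h
    exact hnc _ hp _ hkbS (Or.inl ⟨by omega, by omega, by omega⟩)
  · have hakS : (a, k) ∈ S := by
      rcases h3 with h | h
      · omega
      · exact h
    exact hnc _ hakS _ hp (Or.inl ⟨by omega, by omega, by omega⟩)

lemma PT_split {y a b S} (hPT : PT y a b S) (hab : a + 2 ≤ b) {k : ℕ} (hk : IsApex a b S k) :
    PT y a k ((S.filter (fun p => p.2 ≤ k)).erase (a, k)) ∧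
    PT y k b ((S.filter (fun p => k ≤ p.1)).erase (k, b)) ∧
    S = glue a b k ((S.filter (fun p => p.2 ≤ k)).erase (a, k))
      ((S.filter (fun p => k ≤ p.1)).erase (k, b)) := by
  classical
  have hcov := split_coverage hPT hk
  obtain ⟨hch, hnc, hcard, hprop⟩ := hPT
  obtain ⟨h1, h2, h3, h4⟩ := hk
  set T1 := S.filter (fun p => p.2 ≤ k) with hT1
  set T2 := S.filter (fun p => k ≤ p.1) with hT2
  set S1 := T1.erase (a, k) with hS1
  set S2 := T2.erase (k, b) with hS2
  have hT2' : S.filter (fun p => ¬ p.2 ≤ k) = T2 := by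
    rw [hT2]
    ext p
    simp only [Finset.mem_filter, not_le]
    constructor
    · rintro ⟨hp, hlt⟩
      refine ⟨hp, ?_⟩
      have := hcov p hp
      omega
    · rintro ⟨hp, hge⟩
      refine ⟨hp, ?_⟩
      obtain ⟨w1, w2, w3, w4⟩ := hch p hp
      omega
  have hcards : T1.card + T2.card = S.card := by
    rw [← hT2']
    exact Finset.card_filter_add_card_filter_not _
  -- membership of closing chords
  have hakT1 : a + 2 ≤ k → (a, k) ∈ T1 := by
    intro hak
    rw [hT1, Finset.mem_filter]
    constructor
    · rcases h3 with h | h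
      · omega
      · exact h
    · exact le_rfl
  have hakT1' : k < a + 2 → (a, k) ∉ S := by
    intro hak hmem
    obtain ⟨w1, w2, w3, w4⟩ := hch _ hmem
    simp at w2
    omega
  have hkbT2 : k + 2 ≤ b → (k, b) ∈ T2 := by
    intro hkb
    rw [hT2, Finset.mem_filter]
    constructor
    · rcases h4 with h | h
      · omega
      · exact h
    · exact le_rfl
  have hkbT2' : b < k + 2 → (k, b) ∉ S := by
    intro hkb hmem
    obtain ⟨w1, w2, w3, w4⟩ := hch _ hmem
    simp at w2
    omega
  have hS1ch : ∀ p ∈ S1, Chord a k p := by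
    intro p hp
    have hpT1 := Finset.mem_of_mem_erase hp
    rw [hT1, Finset.mem_filter] at hpT1
    obtain ⟨w1, w2, w3, w4⟩ := hch p hpT1.1
    exact ⟨w1, w2, hpT1.2, Finset.ne_of_mem_erase hp⟩
  have hS2ch : ∀ p ∈ S2, Chord k b p := by
    intro p hp
    have hpT2 := Finset.mem_of_mem_erase hp
    rw [hT2, Finset.mem_filter] at hpT2
    obtain ⟨w1, w2, w3, w4⟩ := hch p hpT2.1
    exact ⟨hpT2.2, w2, w3, Finset.ne_of_mem_erase hp⟩
  have hS1sub : S1 ⊆ S := by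
    intro p hp
    have := Finset.mem_of_mem_erase hp
    rw [hT1, Finset.mem_filter] at this
    exact this.1
  have hS2sub : S2 ⊆ S := by
    intro p hp
    have := Finset.mem_of_mem_erase hp
    rw [hT2, Finset.mem_filter] at this
    exact this.1
  have hb1 : S1.card ≤ k - a - 2 := cardBound (k - a) a k S1 le_rfl hS1ch (hnc.subset hS1sub)
  have hb2 : S2.card ≤ b - k - 2 := cardBound (b - k) k b S2 le_rfl hS2ch (hnc.subset hS2sub)
  -- card relations
  have hcard1 : (a + 2 ≤ k → T1.card = S1.card + 1) ∧ (k < a + 2 → T1.card = 0 ∧ S1.card = 0) := by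
    constructor
    · intro hak
      rw [hS1]
      have := Finset.card_erase_add_one (hakT1 hak)
      omega
    · intro hak
      have hT1e : T1 = ∅ := by
        rw [Finset.eq_empty_iff_forall_notMem]
        intro p hp
        rw [hT1, Finset.mem_filter] at hp
        obtain ⟨w1, w2, _, _⟩ := hch p hp.1
        omega
      constructor
      · simp [hT1e]
      · rw [hS1, hT1e]; simp
  have hcard2 : (k + 2 ≤ b → T2.card = S2.card + 1) ∧ (b < k + 2 → T2.card = 0 ∧ S2.card = 0) := by
    constructor
    · intro hkb
      rw [hS2]
      have := Finset.card_erase_add_one (hkbT2 hkb)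
      omega
    · intro hkb
      have hT2e : T2 = ∅ := by
        rw [Finset.eq_empty_iff_forall_notMem]
        intro p hp
        rw [hT2, Finset.mem_filter] at hp
        obtain ⟨w1, w2, w3, _⟩ := hch p hp.1
        omega
      constructor
      · simp [hT2e]
      · rw [hS2, hT2e]; simp
  have hc1 : S1.card = k - a - 2 := by
    by_cases hak : a + 2 ≤ k <;> by_cases hkb : k + 2 ≤ b
    · have := hcard1.1 hak; have := hcard2.1 hkb; omega
    · have := hcard1.1 hak; have := hcard2.2 (by omega); omega
    · have := hcard1.2 (by omega); have := hcard2.1 hkb; omega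
    · have := hcard1.2 (by omega); have := hcard2.2 (by omega); omega
  have hc2 : S2.card = b - k - 2 := by
    by_cases hak : a + 2 ≤ k <;> by_cases hkb : k + 2 ≤ b
    · have := hcard1.1 hak; have := hcard2.1 hkb; omega
    · have := hcard1.1 hak; have := hcard2.2 (by omega); omega
    · have := hcard1.2 (by omega); have := hcard2.1 hkb; omega
    · have := hcard1.2 (by omega); have := hcard2.2 (by omega); omega
  refine ⟨⟨hS1ch, hnc.subset hS1sub, hc1, fun p hp => hprop p (hS1sub hp)⟩,
    ⟨hS2ch, hnc.subset hS2sub, hc2, fun p hp => hprop p (hS2sub hp)⟩, ?_⟩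
  ext p
  rw [glue_mem]
  constructor
  · intro hp
    obtain ⟨w1, w2, w3, w4⟩ := hch p hp
    rcases hcov p hp with hle | hge
    · by_cases hpk : p = (a, k)
      · left
        refine ⟨?_, hpk⟩
        rw [hpk] at hp
        obtain ⟨_, ww, _, _⟩ := hch _ hp
        simpa using ww
      · right; right; left
        rw [hS1]
        apply Finset.mem_erase_of_ne_of_mem hpk
        rw [hT1, Finset.mem_filter]
        exact ⟨hp, hle⟩
    · by_cases hpk : p = (k, b)
      · right; left
        refine ⟨?_, hpk⟩
        rw [hpk] at hp
        obtain ⟨_, ww, _, _⟩ := hch _ hp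
        simpa using ww
      · right; right; right
        rw [hS2]
        apply Finset.mem_erase_of_ne_of_mem hpk
        rw [hT2, Finset.mem_filter]
        exact ⟨hp, hge⟩
  · rintro (⟨hik, rfl⟩ | ⟨hik, rfl⟩ | hp | hp)
    · rcases h3 with h | h
      · omega
      · exact h
    · rcases h4 with h | h
      · omega
      · exact h
    · exact hS1sub hp
    · exact hS2sub hp

lemma apex_colors {y : ℕ → P1 (ZMod 2)} {m a b : ℕ} {S : Finset (ℕ × ℕ)}
    (hadj : ∀ i < m, y i ≠ y (i + 1)) (hbm : b ≤ m)
    (hPT : PT y a b S) {k : ℕ} (hk : IsApex a b S k) : y k ≠ y a ∧ y k ≠ y b := by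
  obtain ⟨h1, h2, h3, h4⟩ := hk
  constructor
  · rcases h3 with h | h
    · subst h
      exact (hadj a (by omega)).symm
    · exact (hPT.2.2.2 _ h).symm
  · rcases h4 with h | h
    · have hb1 : b - 1 + 1 = b := by omega
      have := hadj (b - 1) (by omega)
      rw [hb1] at this
      rw [h]
      exact this
    · exact hPT.2.2.2 _ h
lemma PT_glue {y : ℕ → P1 (ZMod 2)} {a b k : ℕ} {S1 S2 : Finset (ℕ × ℕ)}
    (h1 : PT y a k S1) (h2 : PT y k b S2) (hak : a < k) (hkb : k < b)
    (hya : y k ≠ y a) (hyb : y k ≠ y b) :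
    PT y a b (glue a b k S1 S2) ∧ IsApex a b (glue a b k S1 S2) k := by
  classical
  obtain ⟨hch1, hnc1, hcard1, hprop1⟩ := h1
  obtain ⟨hch2, hnc2, hcard2, hprop2⟩ := h2
  have hAK : ∀ p ∈ S1, a ≤ p.1 ∧ p.1 + 2 ≤ p.2 ∧ p.2 ≤ k ∧ p ≠ (a,k) := fun p hp => hch1 p hp
  have hKB : ∀ p ∈ S2, k ≤ p.1 ∧ p.1 + 2 ≤ p.2 ∧ p.2 ≤ b ∧ p ≠ (k,b) := fun p hp => hch2 p hp
  have hchg : ∀ p ∈ glue a b k S1 S2, Chord a b p := by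
    intro p hp
    rcases glue_mem.1 hp with ⟨hik, rfl⟩ | ⟨hik, rfl⟩ | hp1 | hp2
    · exact ⟨le_rfl, hik, by omega, by intro h; rw [Prod.ext_iff] at h; simp at h; omega⟩
    · exact ⟨by omega, hik, le_rfl, by intro h; rw [Prod.ext_iff] at h; simp at h; omega⟩
    · obtain ⟨w1, w2, w3, w4⟩ := hAK p hp1
      refine ⟨w1, w2, by omega, ?_⟩
      intro h; rw [Prod.ext_iff] at h; omega
    · obtain ⟨w1, w2, w3, w4⟩ := hKB p hp2
      refine ⟨by omega, w2, w3, ?_⟩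
      intro h; rw [Prod.ext_iff] at h; omega
  have hncg : NC (glue a b k S1 S2) := by
    intro p hp q hq
    rcases glue_mem.1 hp with ⟨hik, rfl⟩ | ⟨hik, rfl⟩ | hp1 | hp2 <;>
      rcases glue_mem.1 hq with ⟨hik', rfl⟩ | ⟨hik', rfl⟩ | hq1 | hq2
    · unfold Cross; simp <;> omega
    · unfold Cross; simp <;> omega
    · obtain ⟨w1, w2, w3, w4⟩ := hAK _ hq1; unfold Cross; simp <;> omega
    · obtain ⟨w1, w2, w3, w4⟩ := hKB _ hq2; unfold Cross; simp <;> omega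
    · unfold Cross; simp <;> omega
    · unfold Cross; simp <;> omega
    · obtain ⟨w1, w2, w3, w4⟩ := hAK _ hq1; unfold Cross; simp <;> omega
    · obtain ⟨w1, w2, w3, w4⟩ := hKB _ hq2; unfold Cross; simp <;> omega
    · obtain ⟨w1, w2, w3, w4⟩ := hAK _ hp1; unfold Cross; simp <;> omega
    · obtain ⟨w1, w2, w3, w4⟩ := hAK _ hp1; unfold Cross; simp <;> omega
    · exact hnc1 _ hp1 _ hq1
    · obtain ⟨w1, w2, w3, w4⟩ := hAK _ hp1
      obtain ⟨v1, v2, v3, v4⟩ := hKB _ hq2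
      unfold Cross; omega
    · obtain ⟨w1, w2, w3, w4⟩ := hKB _ hp2; unfold Cross; simp <;> omega
    · obtain ⟨w1, w2, w3, w4⟩ := hKB _ hp2; unfold Cross; simp <;> omega
    · obtain ⟨w1, w2, w3, w4⟩ := hKB _ hp2
      obtain ⟨v1, v2, v3, v4⟩ := hAK _ hq1
      unfold Cross; omega
    · exact hnc2 _ hp2 _ hq2
  have hpropg : ∀ p ∈ glue a b k S1 S2, y p.1 ≠ y p.2 := by
    intro p hp
    rcases glue_mem.1 hp with ⟨hik, rfl⟩ | ⟨hik, rfl⟩ | hp1 | hp2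
    · exact hya.symm
    · exact hyb
    · exact hprop1 _ hp1
    · exact hprop2 _ hp2
  have hdisj12 : Disjoint S1 S2 := by
    rw [Finset.disjoint_left]
    intro p hp1 hp2
    obtain ⟨w1, w2, w3, w4⟩ := hAK _ hp1
    obtain ⟨v1, v2, v3, v4⟩ := hKB _ hp2
    omega
  have d0 : Disjoint (if a + 2 ≤ k then ({(a, k)} : Finset (ℕ × ℕ)) else ∅)
      (if k + 2 ≤ b then ({(k, b)} : Finset (ℕ × ℕ)) else ∅) := by
    rw [Finset.disjoint_left]
    intro p hp hq
    split_ifs at hp hq <;>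
      first
        | exact absurd hq (Finset.notMem_empty p)
        | exact absurd hp (Finset.notMem_empty p)
        | (rw [Finset.mem_singleton] at hp hq
           rw [hp] at hq
           rw [Prod.ext_iff] at hq
           obtain ⟨e1, e2⟩ := hq
           simp at e1 e2
           omega)
  have d1 : Disjoint ((if a + 2 ≤ k then ({(a, k)} : Finset (ℕ × ℕ)) else ∅) ∪
      (if k + 2 ≤ b then ({(k, b)} : Finset (ℕ × ℕ)) else ∅)) S1 := by
    rw [Finset.disjoint_left]
    intro p hp hq
    obtain ⟨w1, w2, w3, w4⟩ := hAK _ hq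
    rcases Finset.mem_union.1 hp with h | h <;> split_ifs at h <;>
      first
        | exact absurd h (Finset.notMem_empty p)
        | (rw [Finset.mem_singleton] at h; subst h
           first
             | exact w4 rfl
             | (simp at w1 w2 w3; omega))
  have d2 : Disjoint (((if a + 2 ≤ k then ({(a, k)} : Finset (ℕ × ℕ)) else ∅) ∪
      (if k + 2 ≤ b then ({(k, b)} : Finset (ℕ × ℕ)) else ∅)) ∪ S1) S2 := by
    rw [Finset.disjoint_left]
    intro p hp hq
    obtain ⟨v1, v2, v3, v4⟩ := hKB _ hq
    rcases Finset.mem_union.1 hp with h | h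
    · rcases Finset.mem_union.1 h with h | h <;> split_ifs at h <;>
        first
          | exact absurd h (Finset.notMem_empty p)
          | (rw [Finset.mem_singleton] at h; subst h
             first
               | exact v4 rfl
               | (simp at v1 v2 v3; omega))
    · obtain ⟨w1, w2, w3, w4⟩ := hAK _ h
      omega
  have hcardg : (glue a b k S1 S2).card = b - a - 2 := by
    unfold glue
    rw [Finset.card_union_of_disjoint d2, Finset.card_union_of_disjoint d1,
      Finset.card_union_of_disjoint d0]
    have e1 : (if a + 2 ≤ k then ({(a, k)} : Finset (ℕ × ℕ)) else ∅).card = if a + 2 ≤ k then 1 else 0 := by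
      split_ifs <;> simp
    have e2 : (if k + 2 ≤ b then ({(k, b)} : Finset (ℕ × ℕ)) else ∅).card = if k + 2 ≤ b then 1 else 0 := by
      split_ifs <;> simp
    rw [e1, e2, hcard1, hcard2]
    split_ifs with t1 t2 t2 <;> omega
  refine ⟨⟨hchg, hncg, hcardg, hpropg⟩, by omega, by omega, ?_, ?_⟩
  · by_cases hik : a + 2 ≤ k
    · right; rw [glue_mem]; left; exact ⟨hik, rfl⟩
    · left; omega
  · by_cases hik : k + 2 ≤ b
    · right; rw [glue_mem]; right; left; exact ⟨hik, rfl⟩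
    · left; omega

lemma glue_inj_left {a b k : ℕ} {S1 S1' S2 : Finset (ℕ × ℕ)}
    (h1 : ∀ p ∈ S1, Chord a k p) (h1' : ∀ p ∈ S1', Chord a k p)
    (hg : glue a b k S1 S2 = glue a b k S1' S2) (hkb : k < b)
    (h2 : ∀ p ∈ S2, Chord k b p) : S1 = S1' := by
  ext p
  constructor
  · intro hp
    have hmem : p ∈ glue a b k S1' S2 := by
      rw [← hg, glue_mem]; tauto
    obtain ⟨w1, w2, w3, w4⟩ := h1 p hp
    rcases glue_mem.1 hmem with ⟨hik, rfl⟩ | ⟨hik, rfl⟩ | hq | hq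
    · exact absurd rfl w4
    · simp at w3; omega
    · exact hq
    · obtain ⟨v1, v2, v3, v4⟩ := h2 p hq
      omega
  · intro hp
    have hmem : p ∈ glue a b k S1 S2 := by
      rw [hg, glue_mem]; tauto
    obtain ⟨w1, w2, w3, w4⟩ := h1' p hp
    rcases glue_mem.1 hmem with ⟨hik, rfl⟩ | ⟨hik, rfl⟩ | hq | hq
    · exact absurd rfl w4
    · simp at w3; omega
    · exact hq
    · obtain ⟨v1, v2, v3, v4⟩ := h2 p hq
      omega

lemma glue_inj_right {a b k : ℕ} {S1 S2 S2' : Finset (ℕ × ℕ)}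
    (h2 : ∀ p ∈ S2, Chord k b p) (h2' : ∀ p ∈ S2', Chord k b p)
    (hg : glue a b k S1 S2 = glue a b k S1 S2') (hak : a < k)
    (h1 : ∀ p ∈ S1, Chord a k p) : S2 = S2' := by
  ext p
  constructor
  · intro hp
    have hmem : p ∈ glue a b k S1 S2' := by
      rw [← hg, glue_mem]; tauto
    obtain ⟨w1, w2, w3, w4⟩ := h2 p hp
    rcases glue_mem.1 hmem with ⟨hik, rfl⟩ | ⟨hik, rfl⟩ | hq | hq
    · simp at w1; omega
    · exact absurd rfl w4
    · obtain ⟨v1, v2, v3, v4⟩ := h1 p hq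
      omega
    · exact hq
  · intro hp
    have hmem : p ∈ glue a b k S1 S2 := by
      rw [hg, glue_mem]; tauto
    obtain ⟨w1, w2, w3, w4⟩ := h2' p hp
    rcases glue_mem.1 hmem with ⟨hik, rfl⟩ | ⟨hik, rfl⟩ | hq | hq
    · simp at w1; omega
    · exact absurd rfl w4
    · obtain ⟨v1, v2, v3, v4⟩ := h1 p hq
      omega
    · exact hq
def ThreeCol (y : ℕ → P1 (ZMod 2)) (a b : ℕ) : Prop :=
  ∃ j, a ≤ j ∧ j ≤ b ∧ y j ≠ y a ∧ y j ≠ y b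

def Good (y : ℕ → P1 (ZMod 2)) (a b k : ℕ) : Prop :=
  a < k ∧ k < b ∧ y k ≠ y a ∧ y k ≠ y b ∧
    (k = a + 1 ∨ ThreeCol y a k) ∧ (k = b - 1 ∨ ThreeCol y k b)

lemma three_col_ge {y a b} (h : ThreeCol y a b) : a + 2 ≤ b := by
  obtain ⟨j, h1, h2, h3, h4⟩ := h
  by_contra hc
  have : j = a ∨ j = b := by omega
  rcases this with rfl | rfl
  · exact absurd rfl h3
  · exact absurd rfl h4

section Main

variable {y : ℕ → P1 (ZMod 2)} {m : ℕ}

lemma exists_good (hadj : ∀ i < m, y i ≠ y (i + 1)) {a b : ℕ} (hbm : b ≤ m)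
    (hab : a < b) (hyab : y a ≠ y b) (h3 : ThreeCol y a b) : ∃ k, Good y a b k := by
  classical
  set Cset := (Finset.Icc a b).filter (fun j => y j ≠ y a ∧ y j ≠ y b) with hCset
  have hCne : Cset.Nonempty := by
    obtain ⟨j, h1, h2, h3, h4⟩ := h3
    exact ⟨j, by rw [hCset, Finset.mem_filter, Finset.mem_Icc]; exact ⟨⟨h1, h2⟩, h3, h4⟩⟩
  have hmemiff : ∀ j, j ∈ Cset ↔ (a ≤ j ∧ j ≤ b ∧ y j ≠ y a ∧ y j ≠ y b) := by
    intro j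
    rw [hCset, Finset.mem_filter, Finset.mem_Icc]
    tauto
  set k₁ := Cset.min' hCne with hk₁
  have hk₁mem := (hmemiff k₁).1 (Cset.min'_mem hCne)
  obtain ⟨hk₁a, hk₁b, hk₁ya, hk₁yb⟩ := hk₁mem
  have hak₁ : a < k₁ := by
    rcases Nat.eq_or_lt_of_le hk₁a with h | h
    · rw [← h] at hk₁ya; exact absurd rfl hk₁ya
    · exact h
  have hk₁b' : k₁ < b := by
    rcases Nat.eq_or_lt_of_le hk₁b with h | h
    · rw [h] at hk₁yb; exact absurd rfl hk₁yb
    · exact h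
  have hleft : k₁ = a + 1 ∨ ThreeCol y a k₁ := by
    by_cases h : k₁ = a + 1
    · exact Or.inl h
    · right
      refine ⟨a + 1, by omega, by omega, (hadj a (by omega)).symm, ?_⟩
      intro heq
      have : a + 1 ∈ Cset := by
        rw [hmemiff]
        exact ⟨by omega, by omega, (hadj a (by omega)).symm, by rw [heq]; exact hk₁yb⟩
      have := Cset.min'_le _ this
      omega
  by_cases hrg : k₁ = b - 1 ∨ ThreeCol y k₁ b
  · exact ⟨k₁, hak₁, hk₁b', hk₁ya, hk₁yb, hleft, hrg⟩
  push_neg at hrg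
  obtain ⟨hkb1, hnt⟩ := hrg
  have hcb : ∀ j, k₁ ≤ j → j ≤ b → y j = y k₁ ∨ y j = y b := by
    intro j h1 h2
    by_contra hc
    push_neg at hc
    exact hnt ⟨j, h1, h2, hc.1, hc.2⟩
  set k₂ := Cset.max' hCne with hk₂
  have hk₂mem := (hmemiff k₂).1 (Cset.max'_mem hCne)
  obtain ⟨hk₂a, hk₂b, hk₂ya, hk₂yb⟩ := hk₂mem
  have hk₁k₂ : k₁ ≤ k₂ := by
    have h1 := Cset.min'_le _ (Cset.max'_mem hCne)
    omega
  have hCup : ∀ j, y j = y k₁ → a ≤ j → j ≤ b → j ≤ k₂ := by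
    intro j hj h1 h2
    apply Cset.le_max'
    rw [hmemiff]
    exact ⟨h1, h2, by rw [hj]; exact hk₁ya, by rw [hj]; exact hk₁yb⟩
  -- y (k₁ + 1) = y b
  have hk1b2 : k₁ + 2 ≤ b := by omega
  have hyk11 : y (k₁ + 1) = y b := by
    rcases hcb (k₁ + 1) (by omega) (by omega) with h | h
    · exact absurd h.symm (hadj k₁ (by omega))
    · exact h
  have hk₂k₁ : k₁ + 2 ≤ k₂ := by
    rcases Nat.lt_or_ge k₂ (k₁ + 2) with h | h
    · exfalso
      -- then all j in (k₁, b] have y j = y b; in particular k₁+1, k₁+2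
      have h2 : y (k₁ + 2) = y b := by
        rcases hcb (k₁ + 2) (by omega) (by omega) with h2 | h2
        · have := hCup (k₁ + 2) h2 (by omega) (by omega)
          -- k₁ + 2 ≤ k₂ < k₁ + 2 contradiction unless k₂ = k₁ +1?
          omega
        · exact h2
      have := hadj (k₁ + 1) (by omega)
      rw [hyk11, h2] at this
      exact this rfl
    · exact h
  have hk₂a' : a < k₂ := by omega
  have hk₂b' : k₂ < b := by
    rcases Nat.eq_or_lt_of_le hk₂b with h | h
    · rw [h] at hk₂yb; exact absurd rfl hk₂yb
    · exact h
  refine ⟨k₂, hk₂a', hk₂b', hk₂ya, hk₂yb, ?_, ?_⟩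
  · right
    exact ⟨k₁ + 1, by omega, by omega, by rw [hyk11]; exact hyab.symm, by rw [hyk11]; intro h; exact hk₂yb h.symm⟩
  · by_cases h : k₂ = b - 1
    · exact Or.inl h
    · right
      refine ⟨b - 1, by omega, by omega, ?_, ?_⟩
      · intro heq
        have hb1 : b - 1 ∈ Cset := by
          rw [hmemiff]
          exact ⟨by omega, by omega, by rw [heq]; exact hk₂ya, by rw [heq]; exact hk₂yb⟩
        have := Cset.le_max' _ hb1
        omega
      · have h1 := hadj (b - 1) (by omega)
        have h2 : b - 1 + 1 = b := by omega
        rw [h2] at h1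
        exact h1

lemma PT_empty_len1 {a : ℕ} : PT y a (a + 1) (∅ : Finset (ℕ × ℕ)) := by
  refine ⟨by simp, by intro p hp; simp at hp, by simp, by simp⟩

lemma good_PT (hadj : ∀ i < m, y i ≠ y (i + 1)) :
    ∀ n a b, b - a ≤ n → b ≤ m → ∀ k, Good y a b k →
      ∃ S, PT y a b S ∧ IsApex a b S k := by
  intro n
  induction n using Nat.strong_induction_on with
  | _ n IH =>
    intro a b hn hbm k hg
    obtain ⟨h1, h2, h3, h4, h5, h6⟩ := hg
    have hS1 : ∃ S1, PT y a k S1 := by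
      rcases h5 with h | h
      · exact ⟨∅, h ▸ PT_empty_len1⟩
      · obtain ⟨k', hk'⟩ := exists_good hadj (by omega) h1 (Ne.symm h3) h
        obtain ⟨S1, hS1, _⟩ := IH (k - a) (by omega) a k le_rfl (by omega) k' hk'
        exact ⟨S1, hS1⟩
    have hS2 : ∃ S2, PT y k b S2 := by
      rcases h6 with h | h
      · refine ⟨∅, ?_⟩
        have : b = k + 1 := by omega
        exact this ▸ PT_empty_len1
      · obtain ⟨k', hk'⟩ := exists_good hadj hbm h2 h4 h
        obtain ⟨S2, hS2, _⟩ := IH (b - k) (by omega) k b le_rfl hbm k' hk'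
        exact ⟨S2, hS2⟩
    obtain ⟨S1, hS1⟩ := hS1
    obtain ⟨S2, hS2⟩ := hS2
    obtain ⟨hg1, hg2⟩ := PT_glue hS1 hS2 h1 h2 h3 h4
    exact ⟨_, hg1, hg2⟩

lemma PT_exists (hadj : ∀ i < m, y i ≠ y (i + 1)) {a b : ℕ} (hbm : b ≤ m)
    (hab : a < b) (hyab : y a ≠ y b) (h3 : ThreeCol y a b) : ∃ S, PT y a b S := by
  obtain ⟨k, hk⟩ := exists_good hadj hbm hab hyab h3
  obtain ⟨S, hS, _⟩ := good_PT hadj (b - a) a b le_rfl hbm k hk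
  exact ⟨S, hS⟩

lemma apex_good (hadj : ∀ i < m, y i ≠ y (i + 1)) {a b : ℕ} (hbm : b ≤ m)
    (hab : a + 2 ≤ b) {S : Finset (ℕ × ℕ)} (hPT : PT y a b S) {k : ℕ}
    (hk : IsApex a b S k) : Good y a b k := by
  obtain ⟨hc1, hc2⟩ := apex_colors hadj hbm hPT hk
  obtain ⟨hsp1, hsp2, hsp3⟩ := PT_split hPT hab hk
  obtain ⟨h1, h2, h3, h4⟩ := hk
  refine ⟨h1, h2, hc1, hc2, ?_, ?_⟩
  · by_cases hka : k = a + 1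
    · exact Or.inl hka
    · right
      obtain ⟨k', hk'⟩ := exists_apex hsp1 (by omega)
      obtain ⟨w1, w2⟩ := apex_colors hadj (by omega) hsp1 hk'
      obtain ⟨u1, u2, _, _⟩ := hk'
      exact ⟨k', by omega, by omega, w1, w2⟩
  · by_cases hkb : k = b - 1
    · exact Or.inl hkb
    · right
      obtain ⟨k', hk'⟩ := exists_apex hsp2 (by omega)
      obtain ⟨w1, w2⟩ := apex_colors hadj hbm hsp2 hk'
      obtain ⟨u1, u2, _, _⟩ := hk'
      exact ⟨k', by omega, by omega, w1, w2⟩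

lemma alternation (hadj : ∀ i < m, y i ≠ y (i + 1)) {a e : ℕ} (he : e ≤ m)
    {u v : P1 (ZMod 2)} (hu : y a = u) (huv : u ≠ v)
    (hall : ∀ j, a ≤ j → j ≤ e → y j = u ∨ y j = v) :
    ∀ j, a ≤ j → j ≤ e → y j = (if (j - a) % 2 = 0 then u else v) := by
  intro j
  induction j with
  | zero =>
    intro h1 h2
    have : a = 0 := by omega
    subst this
    simp [hu]
  | succ j ih =>
    intro h1 h2
    rcases Nat.eq_or_lt_of_le h1 with h | h
    · rw [← h]
      simp [hu]
    · have haj : a ≤ j := by omega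
      have hyj := ih haj (by omega)
      have hne := hadj j (by omega)
      have hj1 := hall (j + 1) (by omega) h2
      by_cases hpar : (j - a) % 2 = 0
      · rw [if_pos hpar] at hyj
        have : (j + 1 - a) % 2 = 1 := by omega
        rw [this]
        simp only [one_ne_zero, if_false]
        rcases hj1 with hh | hh
        · exfalso; rw [hyj, hh] at hne; exact hne rfl
        · exact hh
      · rw [if_neg hpar] at hyj
        have : (j + 1 - a) % 2 = 0 := by omega
        rw [this]
        simp only [if_pos]
        rcases hj1 with hh | hh
        · exact hh
        · exfalso; rw [hyj, hh] at hne; exact hne rfl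

end Main
section Main2

variable {y : ℕ → P1 (ZMod 2)} {m : ℕ}

lemma PT_unique (hadj : ∀ i < m, y i ≠ y (i + 1)) :
    ∀ n a b, b - a ≤ n → a < b → b ≤ m → y a ≠ y b →
      (∃ i, a ≤ i ∧ i ≤ b ∧ ∀ j, a ≤ j → j ≤ b → j ≠ i → y j ≠ y i) →
      ∀ S S', PT y a b S → PT y a b S' → S = S' := by
  intro n
  induction n using Nat.strong_induction_on with
  | _ n IH =>
    intro a b hn hab hbm hyab huniq S S' hS hS'
    rcases Nat.lt_or_ge b (a + 2) with hsmall | hab2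
    · rw [PT_small hS hsmall, PT_small hS' hsmall]
    obtain ⟨i, hia, hib, hiu⟩ := huniq
    obtain ⟨k, hk⟩ := exists_apex hS hab2
    obtain ⟨k', hk'⟩ := exists_apex hS' hab2
    obtain ⟨hkc1, hkc2⟩ := apex_colors hadj hbm hS hk
    obtain ⟨hkc1', hkc2'⟩ := apex_colors hadj hbm hS' hk'
    by_cases hA : y i = y a
    · -- i = a
      have hia' : i = a := by
        by_contra hne
        exact hiu a le_rfl (by omega) (fun h => hne h.symm) hA.symm
      rw [hia'] at hiu
      -- every apex equals b - 1
      have hapex : ∀ T k₀, PT y a b T → IsApex a b T k₀ → k₀ = b - 1 := by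
        intro T k₀ hT hk₀
        obtain ⟨hc1, hc2⟩ := apex_colors hadj hbm hT hk₀
        by_contra hne
        obtain ⟨u1, u2, u3, u4⟩ := hk₀
        have hk2b : k₀ + 2 ≤ b := by omega
        obtain ⟨hsp1, hsp2, hsp3⟩ := PT_split hT hab2 ⟨u1, u2, u3, u4⟩
        obtain ⟨k₃, hk₃⟩ := exists_apex hsp2 hk2b
        obtain ⟨w1, w2⟩ := apex_colors hadj hbm hsp2 hk₃
        obtain ⟨v1, v2, _, _⟩ := hk₃
        have : y k₃ = y a := third_eq hc2 w1 w2 (fun h => hc1 h.symm) hyab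
        exact hiu k₃ (by omega) (by omega) (by omega) this
      have hkb1 := hapex S k hS hk
      have hkb1' := hapex S' k' hS' hk'
      rw [hkb1] at hk hkc1 hkc2
      rw [hkb1'] at hk' hkc1' hkc2'
      obtain ⟨hsp1, hsp2, hsp3⟩ := PT_split hS hab2 hk
      obtain ⟨hsp1', hsp2', hsp3'⟩ := PT_split hS' hab2 hk'
      have hS2e : ((S.filter (fun p => b - 1 ≤ p.1)).erase (b-1, b)) = ∅ :=
        PT_small hsp2 (by omega)
      have hS2e' : ((S'.filter (fun p => b - 1 ≤ p.1)).erase (b-1, b)) = ∅ :=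
        PT_small hsp2' (by omega)
      have hS1eq : ((S.filter (fun p => p.2 ≤ b - 1)).erase (a, b-1)) =
          ((S'.filter (fun p => p.2 ≤ b - 1)).erase (a, b-1)) := by
        apply IH (b - 1 - a) (by omega) a (b-1) le_rfl (by omega) (by omega) hkc1.symm
          ⟨a, le_rfl, by omega, fun j h1 h2 h3 => hiu j h1 (by omega) h3⟩ _ _ hsp1 hsp1'
      rw [hsp3, hsp3', hS1eq, hS2e, hS2e']
    by_cases hB : y i = y b
    · have hib' : i = b := by
        by_contra hne
        exact hiu b (by omega) le_rfl (fun h => hne h.symm) hB.symm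
      rw [hib'] at hiu
      have hapex : ∀ T k₀, PT y a b T → IsApex a b T k₀ → k₀ = a + 1 := by
        intro T k₀ hT hk₀
        obtain ⟨hc1, hc2⟩ := apex_colors hadj hbm hT hk₀
        by_contra hne
        obtain ⟨u1, u2, u3, u4⟩ := hk₀
        have hk2b : a + 2 ≤ k₀ := by omega
        obtain ⟨hsp1, hsp2, hsp3⟩ := PT_split hT hab2 ⟨u1, u2, u3, u4⟩
        obtain ⟨k₃, hk₃⟩ := exists_apex hsp1 hk2b
        obtain ⟨w1, w2⟩ := apex_colors hadj (by omega) hsp1 hk₃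
        obtain ⟨v1, v2, _, _⟩ := hk₃
        have : y k₃ = y b := third_eq (fun h => hc1 h.symm) w1 w2 hyab.symm (fun h => hc2 h.symm)
        exact hiu k₃ (by omega) (by omega) (by omega) this
      have hkb1 := hapex S k hS hk
      have hkb1' := hapex S' k' hS' hk'
      rw [hkb1] at hk hkc1 hkc2
      rw [hkb1'] at hk' hkc1' hkc2'
      obtain ⟨hsp1, hsp2, hsp3⟩ := PT_split hS hab2 hk
      obtain ⟨hsp1', hsp2', hsp3'⟩ := PT_split hS' hab2 hk'
      have hS1e : ((S.filter (fun p => p.2 ≤ a + 1)).erase (a, a+1)) = ∅ :=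
        PT_small hsp1 (by omega)
      have hS1e' : ((S'.filter (fun p => p.2 ≤ a + 1)).erase (a, a+1)) = ∅ :=
        PT_small hsp1' (by omega)
      have hS2eq : ((S.filter (fun p => a + 1 ≤ p.1)).erase (a+1, b)) =
          ((S'.filter (fun p => a + 1 ≤ p.1)).erase (a+1, b)) := by
        apply IH (b - (a+1)) (by omega) (a+1) b le_rfl (by omega) hbm hkc2
          ⟨b, by omega, le_rfl, fun j h1 h2 h3 => hiu j (by omega) h2 h3⟩ _ _ hsp2 hsp2'
      rw [hsp3, hsp3', hS2eq, hS1e, hS1e']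
    · -- y i is the third color; both apexes equal i
      have hapex : ∀ T k₀, PT y a b T → IsApex a b T k₀ → k₀ = i := by
        intro T k₀ hT hk₀
        obtain ⟨hc1, hc2⟩ := apex_colors hadj hbm hT hk₀
        obtain ⟨u1, u2, _, _⟩ := hk₀
        have : y k₀ = y i := third_eq hyab hc1 hc2 hA hB
        by_contra hne
        exact hiu k₀ (by omega) (by omega) hne this
      have hkb1 := hapex S k hS hk
      have hkb1' := hapex S' k' hS' hk'
      rw [hkb1] at hk hkc1 hkc2
      rw [hkb1'] at hk' hkc1' hkc2'
      obtain ⟨u1, u2, _, _⟩ := id hk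
      obtain ⟨hsp1, hsp2, hsp3⟩ := PT_split hS hab2 hk
      obtain ⟨hsp1', hsp2', hsp3'⟩ := PT_split hS' hab2 hk'
      have hS1eq : ((S.filter (fun p => p.2 ≤ i)).erase (a, i)) =
          ((S'.filter (fun p => p.2 ≤ i)).erase (a, i)) := by
        apply IH (i - a) (by omega) a i le_rfl (by omega) (by omega) (fun h => hA h.symm)
          ⟨i, by omega, le_rfl, fun j h1 h2 h3 => hiu j h1 (by omega) h3⟩ _ _ hsp1 hsp1'
      have hS2eq : ((S.filter (fun p => i ≤ p.1)).erase (i, b)) =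
          ((S'.filter (fun p => i ≤ p.1)).erase (i, b)) := by
        apply IH (b - i) (by omega) i b le_rfl (by omega) hbm hB
          ⟨i, le_rfl, by omega, fun j h1 h2 h3 => hiu j (by omega) h2 h3⟩ _ _ hsp2 hsp2'
      rw [hsp3, hsp3', hS1eq, hS2eq]

end Main2
section Main3

variable {y : ℕ → P1 (ZMod 2)} {m : ℕ}

lemma PT_two (hadj : ∀ i < m, y i ≠ y (i + 1)) :
    ∀ n a b, b - a ≤ n → a < b → b ≤ m → y a ≠ y b → ThreeCol y a b →
      (∀ i, a ≤ i → i ≤ b → ∃ j, a ≤ j ∧ j ≤ b ∧ j ≠ i ∧ y j = y i) →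
      ∃ S S', PT y a b S ∧ PT y a b S' ∧ S ≠ S' := by
  classical
  intro n
  induction n using Nat.strong_induction_on with
  | _ n IH =>
  intro a b hn hab hbm hyab h3 hnu
  have hab2 : a + 2 ≤ b := three_col_ge h3
  obtain ⟨k, hgk⟩ := exists_good hadj hbm hab hyab h3
  have htwo : ∀ k', Good y a b k' → k' ≠ k →
      ∃ S S', PT y a b S ∧ PT y a b S' ∧ S ≠ S' := by
    intro k' hgk' hne
    obtain ⟨S, hS, hSk⟩ := good_PT hadj (b - a) a b le_rfl hbm k hgk
    obtain ⟨S', hS', hSk'⟩ := good_PT hadj (b - a) a b le_rfl hbm k' hgk'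
    refine ⟨S, S', hS, hS', ?_⟩
    intro heq
    rw [heq] at hSk
    exact hne (apex_unique hS' hSk' hSk)
  by_cases hg2' : ∃ k', Good y a b k' ∧ k' ≠ k
  · obtain ⟨k', h1, h2⟩ := hg2'
    exact htwo k' h1 h2
  push_neg at hg2'
  obtain ⟨hk1, hk2, hkca, hkcb, hkl, hkr⟩ := hgk
  have hS2ex : ∃ S2, PT y k b S2 := by
    rcases hkr with h | h
    · refine ⟨∅, ?_⟩
      rw [show b = k + 1 by omega]
      exact PT_empty_len1
    · exact PT_exists hadj hbm hk2 hkcb h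
  have hS1ex : ∃ S1, PT y a k S1 := by
    rcases hkl with h | h
    · exact ⟨∅, by rw [h]; exact PT_empty_len1⟩
    · exact PT_exists hadj (le_trans (le_of_lt hk2) hbm) hk1 (Ne.symm hkca) h
  -- left segment: either unique vertex or we are done
  by_cases hjL : ∃ j1, a ≤ j1 ∧ j1 ≤ k ∧ ∀ j, a ≤ j → j ≤ k → j ≠ j1 → y j ≠ y j1
  case neg =>
    have hka : k ≠ a + 1 := by
      intro h
      apply hjL
      refine ⟨a, le_rfl, by omega, ?_⟩
      intro j h1 h2 h3
      have : j = a + 1 := by omega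
      subst this
      exact (hadj a (by omega)).symm
    have h3L : ThreeCol y a k := by
      rcases hkl with h | h
      · exact absurd h hka
      · exact h
    push_neg at hjL
    obtain ⟨S1, S1', h1, h1', hne⟩ := IH (k - a) (by omega) a k le_rfl hk1
      (by omega) (Ne.symm hkca) h3L hjL
    obtain ⟨S2, hS2⟩ := hS2ex
    obtain ⟨g1, _⟩ := PT_glue h1 hS2 hk1 hk2 hkca hkcb
    obtain ⟨g1', _⟩ := PT_glue h1' hS2 hk1 hk2 hkca hkcb
    refine ⟨_, _, g1, g1', ?_⟩
    intro heq
    exact hne (glue_inj_left h1.1 h1'.1 heq hk2 hS2.1)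
  case pos =>
  by_cases hjR : ∃ j2, k ≤ j2 ∧ j2 ≤ b ∧ ∀ j, k ≤ j → j ≤ b → j ≠ j2 → y j ≠ y j2
  case neg =>
    have hkb : k ≠ b - 1 := by
      intro h
      apply hjR
      refine ⟨b, by omega, le_rfl, ?_⟩
      intro j h1 h2 h3
      have : j = b - 1 := by omega
      subst this
      have h4 := hadj (b - 1) (by omega)
      rwa [show b - 1 + 1 = b by omega] at h4
    have h3R : ThreeCol y k b := by
      rcases hkr with h | h
      · exact absurd h hkb
      · exact h
    push_neg at hjR
    obtain ⟨S2, S2', h2, h2', hne⟩ := IH (b - k) (by omega) k b le_rfl hk2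
      hbm hkcb h3R hjR
    obtain ⟨S1, hS1⟩ := hS1ex
    obtain ⟨g1, _⟩ := PT_glue hS1 h2 hk1 hk2 hkca hkcb
    obtain ⟨g1', _⟩ := PT_glue hS1 h2' hk1 hk2 hkca hkcb
    refine ⟨_, _, g1, g1', ?_⟩
    intro heq
    exact hne (glue_inj_right h2.1 h2'.1 heq hk1 hS1.1)
  case pos =>
  exfalso
  obtain ⟨j1, hj1a, hj1k, hj1u⟩ := hjL
  obtain ⟨j2, hj2k, hj2b, hj2u⟩ := hjR
  obtain ⟨c₀, hc₀a, hc₀b, hc₀ne, hc₀eq⟩ := hnu k (by omega) (by omega)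
  set Cset := (Finset.Icc a b).filter (fun j => y j = y k) with hCset
  have hmem : ∀ j, j ∈ Cset ↔ a ≤ j ∧ j ≤ b ∧ y j = y k := by
    intro j
    rw [hCset, Finset.mem_filter, Finset.mem_Icc]
    tauto
  have hCne : Cset.Nonempty := ⟨k, (hmem k).2 ⟨by omega, by omega, rfl⟩⟩
  rcases Nat.lt_or_ge k c₀ with hck | hck
  · -- c₀ > k : use last C
    set k₂ := Cset.max' hCne with hk₂def
    obtain ⟨hk₂a, hk₂b, hk₂y⟩ := (hmem k₂).1 (Cset.max'_mem hCne)
    have hk₂c₀ : c₀ ≤ k₂ := Cset.le_max' _ ((hmem c₀).2 ⟨hc₀a, hc₀b, hc₀eq⟩)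
    have hkk₂ : k < k₂ := by omega
    have hk₂ca : y k₂ ≠ y a := by rw [hk₂y]; exact hkca
    have hk₂cb : y k₂ ≠ y b := by rw [hk₂y]; exact hkcb
    have hk₂b' : k₂ < b := by
      rcases Nat.eq_or_lt_of_le hk₂b with h | h
      · rw [h] at hk₂cb; exact absurd rfl hk₂cb
      · exact h
    have hrg : k₂ = b - 1 ∨ ThreeCol y k₂ b := by
      by_cases h : k₂ = b - 1
      · exact Or.inl h
      · right
        refine ⟨b - 1, by omega, by omega, ?_, ?_⟩
        · intro heq
          have hm : b - 1 ∈ Cset := (hmem _).2 ⟨by omega, by omega, by rw [heq, hk₂y]⟩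
          have := Cset.le_max' _ hm
          omega
        · have h1 := hadj (b - 1) (by omega)
          rwa [show b - 1 + 1 = b by omega] at h1
    have hnt : ¬ ThreeCol y a k₂ := by
      intro ht
      have : k₂ = k := hg2' k₂ ⟨by omega, by omega, hk₂ca, hk₂cb, Or.inr ht, hrg⟩
      omega
    have hall2 : ∀ j, a ≤ j → j ≤ k₂ → y j = y a ∨ y j = y k := by
      intro j h1 h2
      by_contra hc
      push_neg at hc
      exact hnt ⟨j, h1, h2, hc.1, by rw [hk₂y]; exact hc.2⟩
    have hka1 : k = a + 1 := by
      rcases hkl with h | h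
      · exact h
      · exfalso
        obtain ⟨j, u1, u2, u3, u4⟩ := h
        rcases hall2 j u1 (by omega) with h | h
        · exact u3 h
        · exact u4 h
    have yalt := alternation hadj (show k₂ ≤ m by omega) (rfl : y a = y a)
      (Ne.symm hkca) hall2
    have hk₂odd : (k₂ - a) % 2 = 1 := by
      by_contra h
      have h0 : (k₂ - a) % 2 = 0 := by omega
      have := yalt k₂ (by omega) le_rfl
      rw [if_pos h0] at this
      exact hk₂ca this
    have hk₂3 : a + 3 ≤ k₂ := by omega
    have hj2a : y j2 = y a := by
      obtain ⟨j', u1, u2, u3, u4⟩ := hnu j2 (by omega) hj2b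
      have hj'a : j' = a := by
        rcases Nat.lt_or_ge j' k with h | h
        · omega
        · exact absurd u4 (hj2u j' h u2 u3)
      rw [← u4, hj'a]
    have hya2 : y (a + 2) = y a := by
      have := yalt (a + 2) (by omega) (by omega)
      rwa [if_pos (by omega)] at this
    have hj2eq : j2 = a + 2 := by
      by_contra h
      exact hj2u (a + 2) (by omega) (by omega) (by omega) (by rw [hya2, ← hj2a])
    have hk₂5 : k₂ = a + 3 := by
      by_contra h
      have h5 : a + 5 ≤ k₂ := by omega
      have hya4 : y (a + 4) = y a := by
        have := yalt (a + 4) (by omega) (by omega)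
        rwa [if_pos (by omega)] at this
      exact hj2u (a + 4) (by omega) (by omega) (by omega) (by rw [hya4, ← hj2a])
    have hafter : ∀ j, k₂ < j → j ≤ b → y j = y b := by
      intro j h1 h2
      have hnk : y j ≠ y k := by
        intro h
        have hm2 : j ∈ Cset := (hmem j).2 ⟨by omega, h2, h⟩
        have := Cset.le_max' _ hm2
        omega
      have hna : y j ≠ y a := by
        intro h
        exact hj2u j (by omega) h2 (by omega) (by rw [h, ← hj2a])
      exact third_eq hkca hnk hna (Ne.symm hkcb) (Ne.symm hyab)
    have hbk₂ : b = k₂ + 1 := by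
      by_contra h
      have h2 : k₂ + 2 ≤ b := by omega
      have e1 := hafter (k₂ + 1) (by omega) (by omega)
      have e2 := hafter (k₂ + 2) (by omega) h2
      exact hadj (k₂ + 1) (by omega) (by rw [e1, e2])
    obtain ⟨j', u1, u2, u3, u4⟩ := hnu b (by omega) le_rfl
    have hj'k₂ : j' ≤ k₂ := by omega
    have hv := yalt j' u1 hj'k₂
    by_cases hp : (j' - a) % 2 = 0
    · rw [if_pos hp] at hv
      rw [hv] at u4
      exact hyab u4
    · rw [if_neg hp] at hv
      rw [hv] at u4
      exact hkcb u4
  · -- c₀ < k : use first C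
    have hck' : c₀ < k := by omega
    set k₁ := Cset.min' hCne with hk₁def
    obtain ⟨hk₁a, hk₁b, hk₁y⟩ := (hmem k₁).1 (Cset.min'_mem hCne)
    have hk₁c₀ : k₁ ≤ c₀ := Cset.min'_le _ ((hmem c₀).2 ⟨hc₀a, hc₀b, hc₀eq⟩)
    have hkk₁ : k₁ < k := by omega
    have hk₁ca : y k₁ ≠ y a := by rw [hk₁y]; exact hkca
    have hk₁cb : y k₁ ≠ y b := by rw [hk₁y]; exact hkcb
    have hk₁a' : a < k₁ := by
      rcases Nat.eq_or_lt_of_le hk₁a with h | h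
      · rw [← h] at hk₁ca; exact absurd rfl hk₁ca
      · exact h
    have hlg : k₁ = a + 1 ∨ ThreeCol y a k₁ := by
      by_cases h : k₁ = a + 1
      · exact Or.inl h
      · right
        refine ⟨a + 1, by omega, by omega, (hadj a (by omega)).symm, ?_⟩
        intro heq
        have hm1 : a + 1 ∈ Cset := (hmem _).2 ⟨by omega, by omega, by rw [heq, hk₁y]⟩
        have := Cset.min'_le _ hm1
        omega
    have hnt : ¬ ThreeCol y k₁ b := by
      intro ht
      have : k₁ = k := hg2' k₁ ⟨by omega, by omega, hk₁ca, hk₁cb, hlg, Or.inr ht⟩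
      omega
    have hall2 : ∀ j, k₁ ≤ j → j ≤ b → y j = y k ∨ y j = y b := by
      intro j h1 h2
      by_contra hc
      push_neg at hc
      exact hnt ⟨j, h1, h2, by rw [hk₁y]; exact hc.1, hc.2⟩
    have hkb1 : k = b - 1 := by
      rcases hkr with h | h
      · exact h
      · exfalso
        obtain ⟨j, u1, u2, u3, u4⟩ := h
        rcases hall2 j (by omega) u2 with h | h
        · exact u3 h
        · exact u4 h
    have yalt := alternation hadj hbm hk₁y hkcb
      (fun j h1 h2 => hall2 j h1 h2)
    have hbodd : (b - k₁) % 2 = 1 := by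
      by_contra h
      have h0 : (b - k₁) % 2 = 0 := by omega
      have := yalt b (by omega) le_rfl
      rw [if_pos h0] at this
      exact (Ne.symm hkcb) this
    have hkeven : (k - k₁) % 2 = 0 := by omega
    have hbk₁3 : k₁ + 3 ≤ b := by omega
    have hj1b : y j1 = y b := by
      obtain ⟨j', u1, u2, u3, u4⟩ := hnu j1 hj1a (by omega)
      have hj'b : j' = b := by
        rcases Nat.lt_or_ge k j' with h | h
        · omega
        · exact absurd u4 (hj1u j' u1 h u3)
      rw [← u4, hj'b]
    have hyk11 : y (k₁ + 1) = y b := by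
      have := yalt (k₁ + 1) (by omega) (by omega)
      rwa [if_neg (by omega)] at this
    have hj1eq : j1 = k₁ + 1 := by
      by_contra h
      exact hj1u (k₁ + 1) (by omega) (by omega) (by omega) (by rw [hyk11, ← hj1b])
    have hbeq : b = k₁ + 3 := by
      by_contra h
      have h5 : k₁ + 5 ≤ b := by omega
      have hyk3 : y (k₁ + 3) = y b := by
        have := yalt (k₁ + 3) (by omega) (by omega)
        rwa [if_neg (by omega)] at this
      exact hj1u (k₁ + 3) (by omega) (by omega) (by omega) (by rw [hyk3, ← hj1b])
    have hbefore : ∀ j, a ≤ j → j < k₁ → y j = y a := by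
      intro j h1 h2
      have hnk : y j ≠ y k := by
        intro h
        have hm2 : j ∈ Cset := (hmem j).2 ⟨h1, by omega, h⟩
        have := Cset.min'_le _ hm2
        omega
      have hnb : y j ≠ y b := by
        intro h
        exact hj1u j h1 (by omega) (by omega) (by rw [h, ← hj1b])
      exact third_eq hkcb hnk hnb (Ne.symm hkca) hyab
    have hk₁eq : k₁ = a + 1 := by
      by_contra h
      have e1 := hbefore (a + 1) (by omega) (by omega)
      have e2 := hbefore a le_rfl (by omega)
      exact hadj a (by omega) (by rw [e2, e1])
    obtain ⟨j', u1, u2, u3, u4⟩ := hnu a le_rfl (by omega)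
    have hj'k₁ : k₁ ≤ j' := by omega
    rcases hall2 j' hj'k₁ u2 with h | h
    · rw [u4] at h
      exact (Ne.symm hkca) h
    · rw [u4] at h
      exact hyab h

end Main3

noncomputable def toSet {m : ℕ} (T : Triangulation m) : Finset (ℕ × ℕ) :=
  T.diags.image Subtype.val

lemma toSet_PT {m : ℕ} (y : ℕ → P1 (ZMod 2)) (T : Triangulation m)
    (hP : ProperDiags T y) : PT y 0 m (toSet T) := by
  refine ⟨?_, ?_, ?_, ?_⟩
  · intro p hp
    rw [toSet, Finset.mem_image] at hp
    obtain ⟨d, hd, rfl⟩ := hp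
    obtain ⟨w1, w2, w3⟩ := d.property
    exact ⟨Nat.zero_le _, w1, w2, by
      intro h
      rw [Prod.ext_iff] at h
      exact w3 ⟨h.1, h.2⟩⟩
  · intro p hp q hq
    rw [toSet, Finset.mem_image] at hp hq
    obtain ⟨d, hd, rfl⟩ := hp
    obtain ⟨e, he, rfl⟩ := hq
    exact T.noncross d hd e he
  · rw [toSet, Finset.card_image_of_injective _ Subtype.val_injective, T.card_eq]
    omega
  · intro p hp
    rw [toSet, Finset.mem_image] at hp
    obtain ⟨d, hd, rfl⟩ := hp
    exact hP d hd

lemma PT_toTri {m : ℕ} {y : ℕ → P1 (ZMod 2)} {S : Finset (ℕ × ℕ)} (h : PT y 0 m S) :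
    ∃ T : Triangulation m, ProperDiags T y ∧ toSet T = S := by
  classical
  have hdiag : ∀ p ∈ S, IsDiag m p := by
    intro p hp
    obtain ⟨w1, w2, w3, w4⟩ := h.1 p hp
    refine ⟨w2, w3, ?_⟩
    rintro ⟨e1, e2⟩
    exact w4 (Prod.ext e1 e2)
  have hinj : Function.Injective (fun p : {x // x ∈ S} => (⟨p.val, hdiag p.val p.property⟩ : Diagonal m)) := by
    intro p q hpq
    apply Subtype.ext
    simpa using hpq
  refine ⟨⟨S.attach.image (fun p => ⟨p.val, hdiag p.val p.property⟩), ?_, ?_⟩, ?_, ?_⟩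
  · intro d hd e he
    rw [Finset.mem_image] at hd he
    obtain ⟨p, hp, rfl⟩ := hd
    obtain ⟨q, hq, rfl⟩ := he
    exact h.2.1 p.val p.property q.val q.property
  · rw [Finset.card_image_of_injective _ hinj, Finset.card_attach]
    have := h.2.2.1
    omega
  · intro d hd
    dsimp only at hd
    rw [Finset.mem_image] at hd
    obtain ⟨p, hp, rfl⟩ := hd
    exact h.2.2.2 p.val p.property
  · rw [toSet]
    dsimp only
    rw [Finset.image_image]
    exact S.attach_image_val

theorem stmt11 (m : ℕ) (y : ℕ → P1 (ZMod 2))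
    (h0 : y 0 = ptZero (ZMod 2)) (hlast : y m = ptInf (ZMod 2))
    (hadj : ∀ i < m, y i ≠ y (i + 1)) (hone : ∃ i ≤ m, y i = ptOne (ZMod 2)) :
    (∃! T : Triangulation m, ProperDiags T y) ↔
    ∃ i ≤ m, ∀ j ≤ m, j ≠ i → y j ≠ y i := by
  have hyab : y 0 ≠ y m := by rw [h0, hlast]; exact zero_ne_inf
  have hm : 0 < m := by
    rcases Nat.eq_zero_or_pos m with h | h
    · subst h
      exact absurd (h0.symm.trans hlast) zero_ne_inf
    · exact h
  obtain ⟨i0, hi0m, hi0⟩ := hone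
  have h3 : ThreeCol y 0 m := by
    refine ⟨i0, Nat.zero_le _, hi0m, ?_, ?_⟩
    · rw [hi0, h0]; exact Ne.symm zero_ne_one1
    · rw [hi0, hlast]; exact Ne.symm inf_ne_one1
  constructor
  · rintro ⟨T, hT, hTu⟩
    by_contra hcon
    push_neg at hcon
    have hnu : ∀ i, 0 ≤ i → i ≤ m → ∃ j, 0 ≤ j ∧ j ≤ m ∧ j ≠ i ∧ y j = y i := by
      intro i _ hi
      obtain ⟨j, h1, h2, h3⟩ := hcon i hi
      exact ⟨j, Nat.zero_le _, h1, h2, h3⟩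
    obtain ⟨S, S', hS, hS', hne⟩ := PT_two hadj m 0 m (by omega) hm le_rfl hyab h3 hnu
    obtain ⟨T1, hT1, hT1e⟩ := PT_toTri hS
    obtain ⟨T2, hT2, hT2e⟩ := PT_toTri hS'
    have hteq : T1 = T2 := (hTu T1 hT1).trans (hTu T2 hT2).symm
    apply hne
    rw [← hT1e, ← hT2e, hteq]
  · rintro ⟨i, him, hiu⟩
    have hiu' : ∃ i, 0 ≤ i ∧ i ≤ m ∧ ∀ j, 0 ≤ j → j ≤ m → j ≠ i → y j ≠ y i :=
      ⟨i, Nat.zero_le _, him, fun j _ hj hne => hiu j hj hne⟩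
    obtain ⟨S, hS⟩ := PT_exists hadj le_rfl hm hyab h3
    obtain ⟨T, hT, hTe⟩ := PT_toTri hS
    refine ⟨T, hT, ?_⟩
    intro T' hT'
    have h1 := toSet_PT y T' hT'
    have h2 := toSet_PT y T hT
    have heq : toSet T' = toSet T :=
      PT_unique hadj m 0 m (by omega) hm le_rfl hyab hiu' _ _ h1 h2
    have hd : T'.diags = T.diags := by
      have := Finset.image_injective Subtype.val_injective heq
      exact this
    obtain ⟨d1, n1, c1⟩ := T'
    obtain ⟨d2, n2, c2⟩ := T
    simp only at hd
    subst hd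
    rfl
end

section
/- For every point y in the union of cluster tori X'_F(m) (sequences in P¹(F) with y_0=[1:0], y_m=[0:1], consecutive entries distinct, and not the alternating [1:0],[0:1] sequence), there exists a triangulation T of the (m+1)-gon such that y_i ≠ y_j for every diagonal ij ∈ T. -/
/-!
Clip ears. If `y` is a proper colouring of the path `0, 1, …, m` that is not 2-periodic, some
ear `k, k + 1, k + 2` has `y k ≠ y (k + 2)` and can be chosen so that the colouring of the
polygon with vertex `k + 1` removed is again not 2-periodic; by induction that smaller polygon
has a triangulation whose diagonals join differently coloured vertices, and adding the diagonal
`(k, k + 2)` gives one for the original polygon. A point of `X'_F(m)` is not 2-periodic, since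
the only 2-periodic sequences from `[1:0]` to `[0:1]` are the alternating ones.
-/

/-- The `i`-th vertex of the polygon once vertex `k` is inserted. -/
def skipAt (k i : ℕ) : ℕ := if i < k then i else i + 1

lemma skipAt_of_lt {k i : ℕ} (h : i < k) : skipAt k i = i := if_pos h

lemma skipAt_of_le {k i : ℕ} (h : k ≤ i) : skipAt k i = i + 1 := if_neg (Nat.not_lt.mpr h)

lemma skipAt_strictMono (k : ℕ) : StrictMono (skipAt k) := by
  intro a b h
  unfold skipAt
  split_ifs <;> omega

lemma skipAt_ne (k i : ℕ) : skipAt k i ≠ k := by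
  unfold skipAt
  split_ifs <;> omega

lemma crossing_comm {m : ℕ} (d e : Diagonal m) : Crossing d e ↔ Crossing e d := by
  unfold Crossing
  tauto

section Ear

variable {n k : ℕ}

/-- The diagonal cutting off the ear at vertex `k + 1`. -/
def earDiag (hn : 2 ≤ n) (hk : k < n) : Diagonal (n + 1) :=
  ⟨(k, k + 2), by unfold IsDiag; omega⟩

def Diagonal.insertVertex (k : ℕ) (d : Diagonal n) : Diagonal (n + 1) :=
  ⟨(skipAt k d.val.1, skipAt k d.val.2), by
    obtain ⟨h₁, h₂, h₃⟩ := d.2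
    unfold IsDiag skipAt
    split_ifs <;> simp only [false_and, not_false_eq_true, and_true] <;> omega⟩

lemma Diagonal.insertVertex_injective (k : ℕ) :
    Function.Injective (Diagonal.insertVertex (n := n) k) := by
  intro d e h
  simp only [Diagonal.insertVertex, Subtype.mk.injEq, Prod.mk.injEq,
    (skipAt_strictMono _).injective.eq_iff] at h
  exact Subtype.ext (Prod.ext h.1 h.2)

lemma Diagonal.crossing_insertVertex_iff (k : ℕ) (d e : Diagonal n) :
    Crossing (d.insertVertex k) (e.insertVertex k) ↔ Crossing d e := by
  simp only [Crossing, Diagonal.insertVertex, (skipAt_strictMono _).lt_iff_lt]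

lemma not_crossing_earDiag_insertVertex (hn : 2 ≤ n) (hk : k < n) (d : Diagonal n) :
    ¬ Crossing (earDiag hn hk) (d.insertVertex (k + 1)) := by
  have h₁ := skipAt_ne (k + 1) d.val.1
  have h₂ := skipAt_ne (k + 1) d.val.2
  simp only [Crossing, earDiag, Diagonal.insertVertex]
  omega

lemma earDiag_ne_insertVertex (hn : 2 ≤ n) (hk : k < n) (d : Diagonal n) :
    earDiag hn hk ≠ d.insertVertex (k + 1) := by
  intro h
  have h₁ : skipAt (k + 1) d.val.1 = k := congrArg (fun d => d.val.1) h.symm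
  have h₂ : skipAt (k + 1) d.val.2 = k + 2 := congrArg (fun d => d.val.2) h.symm
  have h₃ := d.2.1
  unfold skipAt at h₁ h₂
  split_ifs at h₁ h₂ <;> omega

/-- Glue the triangle `(k, k + 1, k + 2)` to a triangulation of the polygon without vertex
`k + 1`. -/
def Triangulation.addEar (T : Triangulation n) (hn : 2 ≤ n) (hk : k < n) :
    Triangulation (n + 1) where
  diags := insert (earDiag hn hk)
    (T.diags.map ⟨Diagonal.insertVertex (k + 1), Diagonal.insertVertex_injective (k + 1)⟩)
  noncross := by
    simp only [Finset.mem_insert, Finset.mem_map, Function.Embedding.coeFn_mk]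
    rintro _ (rfl | ⟨d, hd, rfl⟩) _ (rfl | ⟨e, he, rfl⟩)
    · simp [Crossing, earDiag]
    · exact not_crossing_earDiag_insertVertex hn hk e
    · rw [crossing_comm]
      exact not_crossing_earDiag_insertVertex hn hk d
    · rw [Diagonal.crossing_insertVertex_iff]
      exact T.noncross d hd e he
  card_eq := by
    rw [Finset.card_insert_of_notMem, Finset.card_map, T.card_eq]
    · omega
    · simp only [Finset.mem_map, Function.Embedding.coeFn_mk, not_exists, not_and]
      exact fun d _ => (earDiag_ne_insertVertex hn hk d).symm

def Triangulation.Separates {α : Type*} {m : ℕ} (T : Triangulation m) (y : ℕ → α) : Prop :=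
  ∀ d ∈ T.diags, y d.val.1 ≠ y d.val.2

lemma Triangulation.separates_addEar {α : Type*} {y : ℕ → α} {T : Triangulation n}
    (hn : 2 ≤ n) (hk : k < n) (hT : T.Separates (y ∘ skipAt (k + 1)))
    (hear : y k ≠ y (k + 2)) : (T.addEar hn hk).Separates y := by
  simp only [Triangulation.Separates, Triangulation.addEar, Finset.mem_insert, Finset.mem_map,
    Function.Embedding.coeFn_mk]
  rintro _ (rfl | ⟨d, hd, rfl⟩)
  · exact hear
  · exact hT d hd

end Ear

section Colouring

variable {α : Type*} {n : ℕ} {y : ℕ → α}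

lemma adj_ne_comp_skipAt (hadj : ∀ i < n + 1, y i ≠ y (i + 1)) {k : ℕ} (hk : k < n)
    (hear : y k ≠ y (k + 2)) : ∀ i < n, y (skipAt (k + 1) i) ≠ y (skipAt (k + 1) (i + 1)) := by
  intro i hi
  rcases lt_trichotomy i k with h | rfl | h
  · rw [skipAt_of_lt (by omega), skipAt_of_lt (by omega)]
    exact hadj i (by omega)
  · rwa [skipAt_of_lt (by omega), skipAt_of_le le_rfl]
  · rw [skipAt_of_le (by omega), skipAt_of_le (by omega)]
    exact hadj (i + 1) (by omega)

/-- An ear whose removal keeps the colouring from being 2-periodic. -/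
lemma exists_ear (hadj : ∀ i < n + 1, y i ≠ y (i + 1))
    (hper : ∃ i, i + 2 ≤ n + 1 ∧ y i ≠ y (i + 2)) :
    ∃ k < n, y k ≠ y (k + 2) ∧
      (n ≤ 2 ∨ ∃ i, i + 2 ≤ n ∧ y (skipAt (k + 1) i) ≠ y (skipAt (k + 1) (i + 2))) := by
  classical
  have hi₀ := Nat.find_spec hper
  set i₀ := Nat.find hper
  by_cases hn : n ≤ 2
  · exact ⟨i₀, by omega, hi₀.2, Or.inl hn⟩
  by_cases h₀ : i₀ = 0
  · -- on `0, 1, 2, 3, 4` the colouring reads `a b c a c` unless clipping vertex 1 works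
    rw [h₀] at hi₀
    by_cases h₃ : y 0 = y 3
    · by_cases h₄ : y 2 = y 4
      · refine ⟨1, by omega, ?_, Or.inr ⟨1, by omega, ?_⟩⟩
        · rw [← h₃]
          exact (hadj 0 (by omega)).symm
        · rw [skipAt_of_lt (by omega), skipAt_of_le (by omega), ← h₄]
          exact hadj 1 (by omega)
      · refine ⟨0, by omega, hi₀.2, Or.inr ⟨1, by omega, ?_⟩⟩
        rwa [skipAt_of_le (by omega), skipAt_of_le (by omega)]
    · refine ⟨0, by omega, hi₀.2, Or.inr ⟨0, by omega, ?_⟩⟩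
      rwa [skipAt_of_lt (by omega), skipAt_of_le (by omega)]
  · -- by minimality `y (i₀ - 1) = y (i₀ + 1)`, which is adjacent to `y (i₀ + 2)`
    have hmin : y (i₀ - 1) = y (i₀ + 1) := by
      by_contra h
      refine Nat.find_min hper (m := i₀ - 1) (by omega) ⟨by omega, ?_⟩
      rwa [show i₀ - 1 + 2 = i₀ + 1 by omega]
    refine ⟨i₀, by omega, hi₀.2, Or.inr ⟨i₀ - 1, by omega, ?_⟩⟩
    rw [skipAt_of_lt (by omega), skipAt_of_le (by omega), hmin,
      show i₀ - 1 + 2 + 1 = i₀ + 2 by omega]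
    exact hadj (i₀ + 1) (by omega)

end Colouring

theorem Triangulation.exists_separates {α : Type*} {m : ℕ} {y : ℕ → α}
    (hadj : ∀ i < m, y i ≠ y (i + 1)) (hper : m ≤ 2 ∨ ∃ i, i + 2 ≤ m ∧ y i ≠ y (i + 2)) :
    ∃ T : Triangulation m, T.Separates y := by
  induction m generalizing y with
  | zero => exact ⟨⟨∅, by simp, rfl⟩, by simp [Triangulation.Separates]⟩
  | succ n ih =>
    by_cases hm : n + 1 ≤ 2
    · exact ⟨⟨∅, by simp, by simp; omega⟩, by simp [Triangulation.Separates]⟩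
    obtain ⟨k, hk, hear, hper'⟩ := exists_ear hadj (hper.resolve_left hm)
    obtain ⟨T, hT⟩ := ih (adj_ne_comp_skipAt hadj hk hear) hper'
    exact ⟨T.addEar (by omega) hk, Triangulation.separates_addEar (by omega) hk hT hear⟩

lemma eq_mod_two_of_periodic {α : Type*} {m : ℕ} {y : ℕ → α}
    (h : ∀ i, i + 2 ≤ m → y i = y (i + 2)) : ∀ i ≤ m, y i = y (i % 2)
  | 0, _ => rfl
  | 1, _ => rfl
  | i + 2, hi => by
    rw [← h i (by omega), eq_mod_two_of_periodic h i (by omega), Nat.add_mod_right]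

lemma ptZero_ne_ptInf (F : Type*) [Field F] : ptZero F ≠ ptInf F := by
  rw [ptZero, ptInf, Ne, Projectivization.mk_eq_mk_iff]
  rintro ⟨a, ha⟩
  simpa using congrArg Prod.fst ha

theorem stmt13 (F : Type*) [Field F] (m : ℕ) (y : ℕ → P1 F)
    (hy : XCond F m y) (halt : ¬ IsAltSeq F m y) :
    ∃ T : Triangulation m, ProperDiags T y := by
  obtain ⟨h₀, hm, hadj⟩ := hy
  refine Triangulation.exists_separates hadj (Or.inr ?_)
  by_contra! hper
  have hmod := eq_mod_two_of_periodic hper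
  have h₁ : y 1 = ptInf F := by
    rcases Nat.mod_two_eq_zero_or_one m with h | h
    · have : ptZero F = ptInf F := by rw [← h₀, ← hm, hmod m le_rfl, h]
      exact absurd this (ptZero_ne_ptInf F)
    · rw [← h, ← hmod m le_rfl, hm]
  refine halt fun i hi => ?_
  rcases Nat.mod_two_eq_zero_or_one i with h | h <;> simp [hmod i hi, h, h₀, h₁]
end

section
/- Let d_n be defined by the recursion for F_2-point counts of the type D_n cluster variety. Then for n ≥ 4, the number of F_2-points of the type D_n cluster variety equals (5·2^n + 7·(-1)^n)/3; in particular the sequence b_n = (5·2^n + 7·(-1)^n)/3 satisfies b_n = b_{n-1} + 2·b_{n-2} with b_4 = 29 and b_5 = 51. -/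
/-- The `F₂`-points of the cluster variety of an acyclic quiver with arrow function `arr`
(all vertices mutable, frozen variables being set to `1`): tuples
`(x, x')` satisfying the exchange relation at every vertex. -/
abbrev QPoints {V : Type*} [Fintype V] [DecidableEq V] (arr : V → V → Bool) : Type _ :=
  {p : (V → ZMod 2) × (V → ZMod 2) //
    ∀ k, p.1 k * p.2 k =
      (∏ j ∈ Finset.univ.filter (fun j => arr k j = true), p.1 j) +
      ∏ j ∈ Finset.univ.filter (fun j => arr j k = true), p.1 j}

/-- The quiver has no directed cycles. -/
def QAcyclic {V : Type*} (arr : V → V → Bool) : Prop :=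
  ∀ v, ¬ Relation.TransGen (fun i j => arr i j = true) v v
/-- An orientation of the type `D_n` Dynkin diagram: the path `0 → 1 → ⋯ → (n-2)`
together with the arrow `(n-3) → (n-1)`. -/
def dArr (n : ℕ) : Fin n → Fin n → Bool := fun i j =>
  decide ((j.val = i.val + 1 ∧ j.val ≤ n - 2) ∨ (i.val = n - 3 ∧ j.val = n - 1))


/-!
Over `𝔽₂` the exchange relation `x_k x'_k = r_k` has one solution `x'_k` if `x_k = 1`, two if
`x_k = r_k = 0` and none otherwise, so `#V(Q)` is a sum over `x` of a product of such counts.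
Vertex `0` of `D_n` is a source whose only neighbour is `1`. If `x₀ = 1` it drops out of every
relation, leaving `D_{n-1}`; if `x₀ = 0` its relation forces `x₁ = 1` and leaves `x'₀` free, and
then vertex `1` drops out as well, leaving `D_{n-2}`. Hence `d_n = d_{n-1} + 2 d_{n-2}` for
`n ≥ 5`, and with `d_3 = 11`, `d_4 = 29` this gives `3 d_n = 5·2ⁿ + 7·(-1)ⁿ`.
-/

open Finset

def solCount (a r : ZMod 2) : ℕ := if a = 1 then 1 else if r = 0 then 2 else 0

theorem card_mul_eq_eq_solCount (a r : ZMod 2) :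
    Nat.card {y : ZMod 2 // a * y = r} = solCount a r := by
  rw [Nat.card_eq_fintype_card]
  revert a r
  decide

theorem sum_zmod_two {M : Type*} [AddCommMonoid M] (f : ZMod 2 → M) : ∑ a, f a = f 0 + f 1 :=
  Fin.sum_univ_two f

theorem sum_fin_cons {n : ℕ} {β M : Type*} [Fintype β] [AddCommMonoid M]
    (f : (Fin (n + 1) → β) → M) : ∑ x, f x = ∑ a, ∑ y, f (Fin.cons a y) := by
  rw [← (Fin.consEquiv fun _ => β).sum_comp, Fintype.sum_prod_type]
  rfl

section FiberCard

variable {V : Type*} [Fintype V]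

def nbrProd (p : V → Bool) (x : V → ZMod 2) : ZMod 2 :=
  ∏ j ∈ univ.filter (fun j => p j = true), x j

theorem nbrProd_false (x : V → ZMod 2) : nbrProd (fun _ => false) x = 1 := by
  simp [nbrProd]

def fiberCard (arr : V → V → Bool) (x : V → ZMod 2) : ℕ :=
  ∏ k, solCount (x k) (nbrProd (arr k) x + nbrProd (arr · k) x)

theorem card_QPoints_eq_sum_fiberCard [DecidableEq V] (arr : V → V → Bool)
    [Fintype (QPoints arr)] : Fintype.card (QPoints arr) = ∑ x, fiberCard arr x := by
  rw [Fintype.card_eq_nat_card]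
  refine (Nat.card_congr (Equiv.subtypeProdEquivSigmaSubtype
    fun x x' : V → ZMod 2 => ∀ k, x k * x' k = nbrProd (arr k) x + nbrProd (arr · k) x)).trans ?_
  rw [Nat.card_sigma]
  refine sum_congr rfl fun x _ => ?_
  rw [Nat.card_congr (Equiv.subtypePiEquivPi (p := fun k y => x k * y = _)), Nat.card_pi]
  exact prod_congr rfl fun k _ => card_mul_eq_eq_solCount _ _

end FiberCard

section SourceLeaf

variable {n : ℕ}

theorem nbrProd_cons (p : Fin (n + 1) → Bool) (a : ZMod 2) (y : Fin n → ZMod 2) :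
    nbrProd p (Fin.cons a y) = (if p 0 then a else 1) * nbrProd (fun j => p j.succ) y := by
  simp only [nbrProd, prod_filter, Fin.prod_univ_succ, Fin.cons_zero, Fin.cons_succ]

theorem fiberCard_cons_one {arr : Fin (n + 1) → Fin (n + 1) → Bool}
    {arr' : Fin n → Fin n → Bool} (hres : ∀ i j, arr i.succ j.succ = arr' i j)
    (y : Fin n → ZMod 2) : fiberCard arr (Fin.cons 1 y) = fiberCard arr' y := by
  simp [fiberCard, Fin.prod_univ_succ, nbrProd_cons, hres, solCount]

variable {arr : Fin (n + 2) → Fin (n + 2) → Bool}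

theorem fiberCard_cons_zero_cons_zero (hin : ∀ i, arr i 0 = false)
    (hout : ∀ j, arr 0 j = decide (j = 1)) (z : Fin n → ZMod 2) :
    fiberCard arr (Fin.cons (0 : ZMod 2) (Fin.cons (0 : ZMod 2) z)) = 0 := by
  simp [fiberCard, Fin.prod_univ_succ, nbrProd_cons, hin, hout, Fin.succ_succ_ne_one,
    nbrProd_false, solCount]

theorem fiberCard_cons_zero_cons_one (hin : ∀ i, arr i 0 = false)
    (hout : ∀ j, arr 0 j = decide (j = 1)) {arr'' : Fin n → Fin n → Bool}
    (hres : ∀ i j, arr i.succ.succ j.succ.succ = arr'' i j) (z : Fin n → ZMod 2) :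
    fiberCard arr (Fin.cons (0 : ZMod 2) (Fin.cons (1 : ZMod 2) z)) = 2 * fiberCard arr'' z := by
  simp only [fiberCard, Fin.prod_univ_succ, nbrProd_cons, Fin.cons_zero, Fin.cons_succ,
    ite_self, one_mul]
  simp [hin, hout, hres, Fin.succ_succ_ne_one, nbrProd_false, solCount,
    (by decide : (1 : ZMod 2) + 1 = 0)]

theorem card_QPoints_of_sourceLeaf {arr' : Fin (n + 1) → Fin (n + 1) → Bool}
    {arr'' : Fin n → Fin n → Bool} (hin : ∀ i, arr i 0 = false)
    (hout : ∀ j, arr 0 j = decide (j = 1)) (hres' : ∀ i j, arr i.succ j.succ = arr' i j)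
    (hres'' : ∀ i j, arr' i.succ j.succ = arr'' i j) :
    Fintype.card (QPoints arr) =
      Fintype.card (QPoints arr') + 2 * Fintype.card (QPoints arr'') := by
  have hres : ∀ i j, arr i.succ.succ j.succ.succ = arr'' i j := fun i j =>
    (hres' _ _).trans (hres'' i j)
  simp only [card_QPoints_eq_sum_fiberCard]
  rw [sum_fin_cons, sum_zmod_two, sum_fin_cons, sum_zmod_two]
  simp only [fiberCard_cons_one hres', fiberCard_cons_zero_cons_zero hin hout,
    fiberCard_cons_zero_cons_one hin hout hres, sum_const_zero, ← mul_sum]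
  ring

end SourceLeaf

theorem dArr_succ_succ {n : ℕ} (hn : 3 ≤ n) (i j : Fin n) :
    dArr (n + 1) i.succ j.succ = dArr n i j := by
  simp only [dArr, Fin.val_succ, decide_eq_decide]
  omega

theorem dArr_apply_zero_right (n : ℕ) (i : Fin (n + 2)) : dArr (n + 2) i 0 = false := by
  simp only [dArr, Fin.val_zero]
  exact decide_eq_false (by omega)

theorem dArr_zero_apply {n : ℕ} (hn : 2 ≤ n) (j : Fin (n + 2)) :
    dArr (n + 2) 0 j = decide (j = 1) := by
  simp only [dArr, Fin.val_zero, Fin.ext_iff, Fin.val_one]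
  exact decide_eq_decide.mpr (by omega)

theorem card_QPoints_dArr_add_two {n : ℕ} (hn : 3 ≤ n) :
    Fintype.card (QPoints (dArr (n + 2))) =
      Fintype.card (QPoints (dArr (n + 1))) + 2 * Fintype.card (QPoints (dArr n)) :=
  card_QPoints_of_sourceLeaf (dArr_apply_zero_right n) (dArr_zero_apply (by omega))
    (dArr_succ_succ (by omega)) (dArr_succ_succ hn)

theorem three_mul_card_QPoints_dArr {n : ℕ} (hn : 3 ≤ n) :
    3 * (Fintype.card (QPoints (dArr n)) : ℤ) = 5 * 2 ^ n + 7 * (-1) ^ n := by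
  induction n using Nat.strong_induction_on with
  | _ n ih =>
    match n, hn with
    | 3, _ =>
      have h3 : Fintype.card (QPoints (dArr 3)) = 11 := by
        rw [card_QPoints_eq_sum_fiberCard]; decide
      rw [h3]; norm_num
    | 4, _ =>
      have h4 : Fintype.card (QPoints (dArr 4)) = 29 := by
        rw [card_QPoints_eq_sum_fiberCard]; decide
      rw [h4]; norm_num
    | m + 5, _ =>
      rw [card_QPoints_dArr_add_two (by omega)]
      push_cast
      linear_combination ih (m + 4) (by omega) (by omega) + 2 * ih (m + 3) (by omega) (by omega)

theorem stmt19 (B : ℕ → ℤ) (hB : ∀ n, 3 * B n = 5 * 2 ^ n + 7 * (-1) ^ n) :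
    (∀ n, 4 ≤ n → (Fintype.card (QPoints (dArr n)) : ℤ) = B n) ∧
    B 4 = 29 ∧ B 5 = 51 ∧ ∀ n, 2 ≤ n → B n = B (n - 1) + 2 * B (n - 2) := by
  refine ⟨fun n hn => ?_, ?_, ?_, fun n hn => ?_⟩
  · exact mul_left_cancel₀ three_ne_zero
      ((three_mul_card_QPoints_dArr (by omega)).trans (hB n).symm)
  · exact mul_left_cancel₀ three_ne_zero (by rw [hB]; norm_num)
  · exact mul_left_cancel₀ three_ne_zero (by rw [hB]; norm_num)
  · obtain ⟨k, rfl⟩ : ∃ k, n = k + 2 := ⟨n - 2, by omega⟩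
    refine mul_left_cancel₀ (three_ne_zero (α := ℤ)) ?_
    rw [Nat.add_sub_cancel, show k + 2 - 1 = k + 1 by omega, mul_add, mul_left_comm, hB, hB, hB]
    ring
end
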